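/- arXiv:1405.3296 — 8 statements merged into one kernel-verified Lean document; each statement's English description precedes it below -/
import Mathlib

section
/- In the set-cover instance game with the deterministic greedy algorithm, if a joint strategy S = (S_1,...,S_m) contains two distinct agents i and j with S_i ∩ S_j ≠ ∅, then S is not a pure Nash equilibrium. -/
open Finset

section SCIG

variable {α : Type*} [DecidableEq α] {m : ℕ}

/-- Inner loop of the greedy algorithm: scan the remaining order, keeping the
subset covering the most as-yet-uncovered elements (ties broken by order). -/
def bestIdx (S : Fin m → Finset α) (Ucov : Finset α) : List (Fin m) → Fin m → Fin m
  | [], b => b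
  | i :: rest, b =>
      bestIdx S Ucov rest (if (S b ∩ Ucov).card < (S i ∩ Ucov).card then i else b)

/-- Greedy set-cover: repeatedly select the subset (scanned in `order`) covering
the most uncovered elements, until nothing new can be covered.  Returns the
selected agents, in order of selection. -/
def greedyList (S : Fin m → Finset α) (order : List (Fin m)) (Ucov : Finset α) :
    List (Fin m) :=
  match order with
  | [] => []
  | b :: rest =>
    let best := bestIdx S Ucov rest b
    if h : (S best ∩ Ucov).Nonempty then
      best :: greedyList S (b :: rest) (Ucov \ S best)
    else []
termination_by Ucov.card
decreasing_by
  apply Finset.card_lt_card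
  refine ⟨Finset.sdiff_subset, fun hsub => ?_⟩
  obtain ⟨x, hx⟩ := h
  have hx1 := (Finset.mem_inter.mp hx).1
  have hx2 := (Finset.mem_inter.mp hx).2
  have := hsub hx2
  simp [Finset.mem_sdiff, hx1] at this
  exact this.2 hx1

/-- The set-cover instance induced by a joint strategy: its universe. -/
def unionSet (S : Fin m → Finset α) : Finset α := Finset.univ.biUnion S

/-- The cover computed by the deterministic greedy algorithm (fixed order 1..m). -/
def coverD (S : Fin m → Finset α) : Finset (Fin m) :=
  (greedyList S (List.finRange m) (unionSet S)).toFinset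

/-- Utility of agent `i` in the deterministic game. -/
noncomputable def utilD (beta alpha : ℝ) (S : Fin m → Finset α) (i : Fin m) : ℝ :=
  (if i ∈ coverD S then beta else 0) - alpha * (S i).card

/-- Pure Nash equilibrium of the deterministic game. -/
def IsNashD (beta alpha : ℝ) (S : Fin m → Finset α) : Prop :=
  ∀ (i : Fin m) (T : Finset α),
    utilD beta alpha (Function.update S i T) i ≤ utilD beta alpha S i

/-- Probability (over a uniformly random permutation of the agents) that agent
`i`'s subset is selected by the non-deterministic greedy algorithm. -/
noncomputable def probSel (S : Fin m → Finset α) (i : Fin m) : ℝ :=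
  (Finset.univ.filter (fun π : Equiv.Perm (Fin m) =>
      i ∈ greedyList S ((List.finRange m).map π) (unionSet S))).card
    / (Nat.factorial m)

/-- Expected utility of agent `i` in the non-deterministic game. -/
noncomputable def utilN (beta alpha : ℝ) (S : Fin m → Finset α) (i : Fin m) : ℝ :=
  beta * probSel S i - alpha * (S i).card

/-- Pure Nash equilibrium of the non-deterministic game. -/
def IsNashN (beta alpha : ℝ) (S : Fin m → Finset α) : Prop :=
  ∀ (i : Fin m) (T : Finset α),
    utilN beta alpha (Function.update S i T) i ≤ utilN beta alpha S i

end SCIG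

section AuxLemmas

variable {α : Type*} [DecidableEq α] {m : ℕ}

open Finset

/-- Generic "first argmax with accumulator" function, abstracting `bestIdx`. -/
def bestF (f : Fin m → ℕ) : List (Fin m) → Fin m → Fin m
  | [], b => b
  | i :: rest, b => bestF f rest (if f b < f i then i else b)

lemma bestIdx_eq_bestF (S : Fin m → Finset α) (U : Finset α) (l : List (Fin m)) (b : Fin m) :
    bestIdx S U l b = bestF (fun c => (S c ∩ U).card) l b := by
  induction l generalizing b with
  | nil => rfl
  | cons i rest ih => rw [bestIdx, bestF, ih]

lemma bestF_eq_self (f : Fin m → ℕ) (l : List (Fin m)) (b : Fin m)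
    (h : ∀ c ∈ l, f c ≤ f b) : bestF f l b = b := by
  induction l with
  | nil => rfl
  | cons i rest ih =>
    have hni : ¬ f b < f i := not_lt.2 (h i (by simp))
    rw [bestF, if_neg hni]
    exact ih (fun c hc => h c (by simp [hc]))

lemma bestF_of_lt (f : Fin m → ℕ) (w : Fin m) :
    ∀ (pre : List (Fin m)) (c : Fin m) (post : List (Fin m)),
    f c < f w → (∀ d ∈ pre, f d < f w) → (∀ d ∈ post, f d ≤ f w) →
    bestF f (pre ++ w :: post) c = w := by
  intro pre
  induction pre with
  | nil =>
    intro c post hc hpre hpost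
    simp only [List.nil_append, bestF, if_pos hc]
    exact bestF_eq_self f post w hpost
  | cons q pre' ih =>
    intro c post hc hpre hpost
    simp only [List.cons_append, bestF]
    apply ih _ post _ (fun d hd => hpre d (by simp [hd])) hpost
    split <;> [exact hpre q (by simp); exact hc]

lemma bestF_fm (f : Fin m → ℕ) :
    ∀ (l : List (Fin m)) (b : Fin m), ∃ pre post,
      b :: l = pre ++ bestF f l b :: post ∧
      (∀ c ∈ pre, f c < f (bestF f l b)) ∧
      (∀ c ∈ post, f c ≤ f (bestF f l b)) := by
  intro l
  induction l with
  | nil => intro b; exact ⟨[], [], rfl, by simp, by simp⟩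
  | cons i rest ih =>
    intro b
    by_cases h : f b < f i
    · have hb : bestF f (i :: rest) b = bestF f rest i := by rw [bestF, if_pos h]
      rw [hb]
      obtain ⟨pre', post', hdec, hpre, hpost⟩ := ih i
      cases pre' with
      | nil =>
        simp only [List.nil_append, List.cons.injEq] at hdec
        obtain ⟨hw, hrest⟩ := hdec
        refine ⟨[b], post', ?_, ?_, hpost⟩
        · rw [List.singleton_append, ← hw, ← hrest]
        · intro c hc
          simp only [List.mem_singleton] at hc
          subst hc; rw [← hw]; exact h
      | cons q pre'' =>
        simp only [List.cons_append, List.cons.injEq] at hdec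
        obtain ⟨hq, hrest⟩ := hdec
        refine ⟨b :: q :: pre'', post', ?_, ?_, hpost⟩
        · show b :: i :: rest = b :: q :: (pre'' ++ bestF f rest i :: post')
          conv_lhs => rw [hq, hrest]
        · intro c hc
          rcases List.mem_cons.mp hc with rfl | hc'
          · exact lt_trans (hq ▸ h) (hpre q (by simp))
          · exact hpre c hc'
    · have hb : bestF f (i :: rest) b = bestF f rest b := by rw [bestF, if_neg h]
      rw [hb]
      obtain ⟨pre', post', hdec, hpre, hpost⟩ := ih b
      cases pre' with
      | nil =>
        simp only [List.nil_append, List.cons.injEq] at hdec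
        obtain ⟨hw, hrest⟩ := hdec
        refine ⟨[], i :: post', ?_, by simp, ?_⟩
        · rw [List.nil_append, ← hw, ← hrest]
        · intro c hc
          simp only [List.mem_cons] at hc
          rcases hc with rfl | hc
          · rw [← hw]; exact not_lt.1 h
          · exact hpost c hc
      | cons q pre'' =>
        simp only [List.cons_append, List.cons.injEq] at hdec
        obtain ⟨hq, hrest⟩ := hdec
        refine ⟨b :: i :: pre'', post', ?_, ?_, hpost⟩
        · show b :: i :: rest = b :: i :: (pre'' ++ bestF f rest b :: post')
          conv_lhs => rw [hrest]
        · intro c hc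
          have hbw : f b < f (bestF f rest b) := by
            have := hpre q (by simp); rwa [← hq] at this
          simp only [List.mem_cons] at hc
          rcases hc with rfl | rfl | hc
          · exact hbw
          · exact lt_of_le_of_lt (not_lt.1 h) hbw
          · exact hpre c (by simp [hc])

lemma bestF_converse (f : Fin m → ℕ) (l : List (Fin m)) (b w : Fin m)
    (pre post : List (Fin m)) (hdec : b :: l = pre ++ w :: post)
    (hpre : ∀ c ∈ pre, f c < f w) (hpost : ∀ c ∈ post, f c ≤ f w) :
    bestF f l b = w := by
  cases pre with
  | nil =>
    simp only [List.nil_append, List.cons.injEq] at hdec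
    obtain ⟨rfl, rfl⟩ := hdec
    exact bestF_eq_self f _ _ hpost
  | cons q pre' =>
    simp only [List.cons_append, List.cons.injEq] at hdec
    obtain ⟨rfl, rfl⟩ := hdec
    exact bestF_of_lt f w pre' b post (hpre b (by simp))
      (fun d hd => hpre d (by simp [hd])) hpost

lemma bestF_transfer (f f' : Fin m → ℕ) (a : Fin m)
    (hle : ∀ c, f' c ≤ f c) (heq : ∀ c, c ≠ a → f' c = f c)
    (l : List (Fin m)) (b : Fin m) (hne : bestF f l b ≠ a) :
    bestF f' l b = bestF f l b := by
  obtain ⟨pre, post, hdec, hpre, hpost⟩ := bestF_fm f l b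
  have hw : f' (bestF f l b) = f (bestF f l b) := heq _ hne
  exact bestF_converse f' l b _ pre post hdec
    (fun c hc => lt_of_le_of_lt (hle c) (hw ▸ hpre c hc))
    (fun c hc => le_trans (hle c) (hw ▸ hpost c hc))

lemma inter_congr_subset {A B U V : Finset α} (h : A ∩ U = B ∩ U) (hV : V ⊆ U) :
    A ∩ V = B ∩ V := by
  ext y
  simp only [mem_inter]
  constructor <;> rintro ⟨h1, h2⟩ <;> refine ⟨?_, h2⟩
  · have hy : y ∈ B ∩ U := h ▸ (mem_inter.mpr ⟨h1, hV h2⟩)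
    exact (mem_inter.mp hy).1
  · have hy : y ∈ A ∩ U := h.symm ▸ (mem_inter.mpr ⟨h1, hV h2⟩)
    exact (mem_inter.mp hy).1

lemma sdiff_congr_of_inter {A B U : Finset α} (h : A ∩ U = B ∩ U) : U \ A = U \ B := by
  ext y
  simp only [mem_sdiff]
  constructor <;> rintro ⟨hyU, hyA⟩ <;> refine ⟨hyU, fun hy => hyA ?_⟩
  · have : y ∈ B ∩ U := mem_inter.mpr ⟨hy, hyU⟩
    rw [← h] at this
    exact (mem_inter.mp this).1
  · have : y ∈ A ∩ U := mem_inter.mpr ⟨hy, hyU⟩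
    rw [h] at this
    exact (mem_inter.mp this).1

/-- The greedy list only depends on the intersections of the strategies with the
uncovered set. -/
theorem greedy_congr (S S' : Fin m → Finset α) (order : List (Fin m)) (U : Finset α)
    (h : ∀ b, S b ∩ U = S' b ∩ U) :
    greedyList S order U = greedyList S' order U := by
  match order with
  | [] => rw [greedyList, greedyList]
  | b :: rest =>
    have hbi : bestIdx S' U rest b = bestIdx S U rest b := by
      rw [bestIdx_eq_bestF, bestIdx_eq_bestF]
      congr 1
      funext c
      rw [h c]
    conv_lhs => rw [greedyList]
    conv_rhs => rw [greedyList]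
    rw [hbi]
    set w := bestIdx S U rest b with hwdef
    have hiw : S w ∩ U = S' w ∩ U := h w
    by_cases hne : (S w ∩ U).Nonempty
    · have hne' : (S' w ∩ U).Nonempty := hiw ▸ hne
      rw [dif_pos hne, dif_pos hne']
      have hsd : U \ S w = U \ S' w := sdiff_congr_of_inter hiw
      rw [← hsd]
      congr 1
      exact greedy_congr S S' (b :: rest) (U \ S w)
        (fun c => inter_congr_subset (h c) Finset.sdiff_subset)
    · have hne' : ¬ (S' w ∩ U).Nonempty := hiw ▸ hne
      rw [dif_neg hne, dif_neg hne']
termination_by U.card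
decreasing_by
  apply Finset.card_lt_card
  refine ⟨Finset.sdiff_subset, fun hsub => ?_⟩
  obtain ⟨y, hy⟩ := hne
  have hy1 := (Finset.mem_inter.mp hy).1
  have hy2 := (Finset.mem_inter.mp hy).2
  have := hsub hy2
  simp [Finset.mem_sdiff, hy1] at this
  exact this.2 hy1

/-- Lifting lemma: if agent `a` (distinct from the currently selected agent) is
selected in the continuation run of the modified game, it is selected in the
full run of the modified game. -/
lemma greedy_lift (S : Fin m → Finset α) (a : Fin m) (x : α) (b : Fin m)
    (rest : List (Fin m)) (U : Finset α) (hxU : x ∈ U)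
    (hne : a ≠ bestIdx S U rest b)
    (h : (S (bestIdx S U rest b) ∩ U).Nonempty)
    (ha : a ∈ greedyList (Function.update S a (S a \ {x})) (b :: rest)
      (U \ S (bestIdx S U rest b))) :
    a ∈ greedyList (Function.update S a (S a \ {x})) (b :: rest) U := by
  set S' := Function.update S a (S a \ {x}) with hS'
  set w := bestIdx S U rest b with hwdef
  have hS'w : S' w = S w := Function.update_of_ne (Ne.symm hne) _ S
  have hbi : bestIdx S' U rest b = w := by
    rw [bestIdx_eq_bestF, hwdef, bestIdx_eq_bestF]
    apply bestF_transfer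
    · intro c
      by_cases hc : c = a
      · subst hc
        apply Finset.card_le_card
        apply Finset.inter_subset_inter_right
        rw [hS', Function.update_self]
        exact Finset.sdiff_subset
      · rw [hS', Function.update_of_ne hc]
    · intro c hc
      rw [hS', Function.update_of_ne hc]
    · rw [← bestIdx_eq_bestF, ← hwdef]
      exact Ne.symm hne
  rw [greedyList, hbi, dif_pos (by rw [hS'w]; exact h), hS'w]
  exact List.mem_cons_of_mem _ ha

/-- Key lemma: if `x ∈ U` belongs to the strategies of both selected agents `i ≠ j`,
then one of them remains selected after dropping `x` from its strategy. -/
theorem greedy_drop (S : Fin m → Finset α) (x : α) (i j : Fin m) (hij : i ≠ j)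
    (hxi : x ∈ S i) (hxj : x ∈ S j) (order : List (Fin m)) (U : Finset α) (hxU : x ∈ U)
    (hi : i ∈ greedyList S order U) (hj : j ∈ greedyList S order U) :
    ∃ a, (a = i ∨ a = j) ∧
      a ∈ greedyList (Function.update S a (S a \ {x})) order U := by
  match order with
  | [] => rw [greedyList] at hi; simp at hi
  | b :: rest =>
    rw [greedyList] at hi hj
    set w := bestIdx S U rest b with hwdef
    by_cases h : (S w ∩ U).Nonempty
    case neg => rw [dif_neg h] at hi; simp at hi
    rw [dif_pos h] at hi hj
    by_cases hxw : x ∈ S w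
    · -- x gets covered at this step
      have hxU' : x ∉ U \ S w := by simp [hxw]
      obtain ⟨a, haij, haw, hatail⟩ :
          ∃ a, (a = i ∨ a = j) ∧ a ≠ w ∧ a ∈ greedyList S (b :: rest) (U \ S w) := by
        by_cases hwi : w = i
        · have hjw : j ≠ w := fun e => hij (e.trans hwi).symm
          refine ⟨j, Or.inr rfl, hjw, ?_⟩
          rcases List.mem_cons.mp hj with e | hj'
          · exact absurd e hjw
          · exact hj'
        · refine ⟨i, Or.inl rfl, fun e => hwi e.symm, ?_⟩
          rcases List.mem_cons.mp hi with e | hi'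
          · exact absurd e (fun e' => hwi e'.symm)
          · exact hi'
      have hxa : x ∈ S a := by rcases haij with rfl | rfl <;> assumption
      set S' := Function.update S a (S a \ {x}) with hS'
      have hcongr : ∀ c, S c ∩ (U \ S w) = S' c ∩ (U \ S w) := by
        intro c
        by_cases hc : c = a
        · subst hc
          rw [hS', Function.update_self]
          ext y
          simp only [mem_inter, mem_sdiff, Finset.mem_sdiff, Finset.mem_singleton]
          constructor
          · rintro ⟨h1, h2, h3⟩
            exact ⟨⟨h1, fun e => h3 (e ▸ hxw)⟩, h2, h3⟩
          · rintro ⟨⟨h1, _⟩, h2, h3⟩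
            exact ⟨h1, h2, h3⟩
        · rw [hS', Function.update_of_ne hc]
      have hatail' : a ∈ greedyList S' (b :: rest) (U \ S w) := by
        rw [← greedy_congr S S' (b :: rest) (U \ S w) hcongr]
        exact hatail
      exact ⟨a, haij, greedy_lift S a x b rest U hxU (fun e => haw (e.trans hwdef.symm ▸ rfl)) h
        (by rw [← hwdef]; exact hatail')⟩
    · -- x not covered at this step
      have hwi : i ≠ w := fun e => hxw (e ▸ hxi)
      have hwj : j ≠ w := fun e => hxw (e ▸ hxj)
      have hi' : i ∈ greedyList S (b :: rest) (U \ S w) := by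
        rcases List.mem_cons.mp hi with e | hi' ; exact absurd e hwi; exact hi'
      have hj' : j ∈ greedyList S (b :: rest) (U \ S w) := by
        rcases List.mem_cons.mp hj with e | hj' ; exact absurd e hwj; exact hj'
      have hxU' : x ∈ U \ S w := Finset.mem_sdiff.mpr ⟨hxU, hxw⟩
      obtain ⟨a, haij, ha⟩ :=
        greedy_drop S x i j hij hxi hxj (b :: rest) (U \ S w) hxU' hi' hj'
      have haw : a ≠ w := by rcases haij with rfl | rfl <;> assumption
      exact ⟨a, haij, greedy_lift S a x b rest U hxU haw h ha⟩
termination_by U.card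
decreasing_by
  apply Finset.card_lt_card
  refine ⟨Finset.sdiff_subset, fun hsub => ?_⟩
  obtain ⟨y, hy⟩ := h
  have hy1 := (Finset.mem_inter.mp hy).1
  have hy2 := (Finset.mem_inter.mp hy).2
  have := hsub hy2
  simp [Finset.mem_sdiff, hy1] at this
  exact this.2 hy1

lemma unionSet_update (S : Fin m → Finset α) (a b : Fin m) (x : α) (hab : b ≠ a)
    (hxb : x ∈ S b) :
    unionSet (Function.update S a (S a \ {x})) = unionSet S := by
  ext y
  simp only [unionSet, Finset.mem_biUnion, Finset.mem_univ, true_and]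
  constructor
  · rintro ⟨c, hc⟩
    by_cases h : c = a
    · subst h
      rw [Function.update_self] at hc
      exact ⟨c, (Finset.mem_sdiff.mp hc).1⟩
    · rw [Function.update_of_ne h] at hc
      exact ⟨c, hc⟩
  · rintro ⟨c, hc⟩
    by_cases h : c = a
    · subst h
      by_cases hy : y = x
      · exact ⟨b, by rw [Function.update_of_ne hab]; exact hy ▸ hxb⟩
      · exact ⟨c, by rw [Function.update_self]; exact Finset.mem_sdiff.mpr ⟨hc, by simpa using hy⟩⟩
    · exact ⟨c, by rw [Function.update_of_ne h]; exact hc⟩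

end AuxLemmas


/-- With the deterministic greedy algorithm, a joint strategy in
which two distinct agents' strategies overlap is not a pure Nash equilibrium. -/
theorem scigD_overlap_not_nash {α : Type*} [DecidableEq α] {m : ℕ}
    (beta alpha : ℝ) (hbeta : 0 < beta) (halpha : 0 < alpha)
    (S : Fin m → Finset α) (i j : Fin m) (hij : i ≠ j)
    (hover : (S i ∩ S j).Nonempty) :
    ¬ IsNashD beta alpha S := by
  obtain ⟨x, hx⟩ := hover
  have hxi : x ∈ S i := (Finset.mem_inter.mp hx).1
  have hxj : x ∈ S j := (Finset.mem_inter.mp hx).2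
  intro hN
  -- helper: an uncovered agent with a nonempty strategy can profitably deviate to ∅
  have uncov : ∀ k : Fin m, x ∈ S k → k ∉ coverD S → False := by
    intro k hxk hk
    have h1 := hN k ∅
    rw [utilD, utilD, if_neg hk, Function.update_self] at h1
    have hcard : 0 < ((S k).card : ℝ) := by
      exact_mod_cast Finset.card_pos.mpr ⟨x, hxk⟩
    have h2 : (0:ℝ) ≤ (if k ∈ coverD (Function.update S k ∅) then beta else 0) := by
      split <;> [exact le_of_lt hbeta; exact le_refl 0]
    simp only [Finset.card_empty, Nat.cast_zero, mul_zero, sub_zero, zero_sub] at h1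
    nlinarith
  by_cases hic : i ∈ coverD S
  case neg => exact uncov i hxi hic
  by_cases hjc : j ∈ coverD S
  case neg => exact uncov j hxj hjc
  -- both are selected; drop x from the appropriate one
  have hxU : x ∈ unionSet S := by
    simp only [unionSet, Finset.mem_biUnion]
    exact ⟨i, Finset.mem_univ i, hxi⟩
  have hi' : i ∈ greedyList S (List.finRange m) (unionSet S) :=
    List.mem_toFinset.mp hic
  have hj' : j ∈ greedyList S (List.finRange m) (unionSet S) :=
    List.mem_toFinset.mp hjc
  obtain ⟨a, haij, ha⟩ :=
    greedy_drop S x i j hij hxi hxj (List.finRange m) (unionSet S) hxU hi' hj'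
  have hxa : x ∈ S a := by rcases haij with rfl | rfl <;> assumption
  have hac : a ∈ coverD S := by rcases haij with rfl | rfl <;> assumption
  -- the universe is unchanged after the deviation
  obtain ⟨b, hba, hxb⟩ : ∃ b, b ≠ a ∧ x ∈ S b := by
    rcases haij with rfl | rfl
    · exact ⟨j, fun e => hij e.symm, hxj⟩
    · exact ⟨i, hij, hxi⟩
  have hU : unionSet (Function.update S a (S a \ {x})) = unionSet S :=
    unionSet_update S a b x hba hxb
  have hac' : a ∈ coverD (Function.update S a (S a \ {x})) := by
    rw [coverD, hU]
    exact List.mem_toFinset.mpr ha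
  -- compare utilities
  have h1 := hN a (S a \ {x})
  rw [utilD, utilD, if_pos hac, if_pos hac', Function.update_self] at h1
  have hcard : (S a \ {x}).card = (S a).card - 1 := by
    rw [Finset.sdiff_singleton_eq_erase, Finset.card_erase_of_mem hxa]
  have hpos : 1 ≤ (S a).card := Finset.card_pos.mpr ⟨x, hxa⟩
  rw [hcard] at h1
  have hcast : (((S a).card - 1 : ℕ) : ℝ) = ((S a).card : ℝ) - 1 := by
    push_cast [hpos]
    ring
  rw [hcast] at h1
  nlinarith
end

section
/- In the set-cover instance game with the deterministic greedy algorithm, there is no pure Nash equilibrium in which some agent i has |S_i| > 1. -/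
open Finset

section Proof
variable {α : Type*} [DecidableEq α] {m : ℕ}

lemma bestIdx_le (S : Fin m → Finset α) (U : Finset α) :
    ∀ (l : List (Fin m)) (b k : Fin m), (k = b ∨ k ∈ l) →
      (S k ∩ U).card ≤ (S (bestIdx S U l b) ∩ U).card := by
  intro l
  induction l with
  | nil =>
    rintro b k (rfl | h)
    · exact le_refl _
    · simp at h
  | cons i rest ih =>
    rintro b k hk
    rw [bestIdx]
    set nb := if (S b ∩ U).card < (S i ∩ U).card then i else b with hnb
    have hb : (S b ∩ U).card ≤ (S nb ∩ U).card := by rw [hnb]; split <;> omega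
    have hi : (S i ∩ U).card ≤ (S nb ∩ U).card := by rw [hnb]; split <;> omega
    have hnbb : (S nb ∩ U).card ≤ (S (bestIdx S U rest nb) ∩ U).card := ih nb nb (Or.inl rfl)
    rcases hk with rfl | hk
    · exact hb.trans hnbb
    · rcases List.mem_cons.mp hk with rfl | hk
      · exact hi.trans hnbb
      · exact ih nb k (Or.inr hk)

lemma bestIdx_congr_eq (S S' : Fin m → Finset α) (U : Finset α)
    (h : ∀ k, (S' k ∩ U).card = (S k ∩ U).card) :
    ∀ (l : List (Fin m)) (b : Fin m), bestIdx S' U l b = bestIdx S U l b := by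
  intro l
  induction l with
  | nil => intro b; rfl
  | cons i rest ih => intro b; rw [bestIdx, bestIdx, h, h, ih]

lemma bestIdx_congr (S S' : Fin m → Finset α) (U : Finset α) (j : Fin m)
    (hS : ∀ k, k ≠ j → S' k = S k)
    (hle : (S' j ∩ U).card ≤ (S j ∩ U).card) :
    ∀ (l : List (Fin m)) (b b' : Fin m),
      (b' = b ∨ (b = j ∧ b' ≠ j ∧ (S b' ∩ U).card ≤ (S j ∩ U).card)) →
      bestIdx S U l b ≠ j → bestIdx S' U l b' = bestIdx S U l b := by
  intro l
  induction l with
  | nil =>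
    rintro b b' hR hbj
    rcases hR with hR | ⟨hbj2, hb', hc⟩
    · rw [bestIdx, bestIdx, hR]
    · rw [bestIdx] at hbj; exact absurd hbj2 hbj
  | cons i rest ih =>
    rintro b b' hR hbj
    rw [bestIdx] at hbj ⊢
    rw [bestIdx]
    refine ih _ _ ?_ hbj
    rcases hR with hR | ⟨hbj2, hb', hc⟩
    · rw [hR]
      by_cases hbjj : b = j
      · rw [hbjj]
        by_cases hij : i = j
        · rw [hij]; simp
        · rw [hS i hij]
          by_cases h1 : (S j ∩ U).card < (S i ∩ U).card
          · have h2 : (S' j ∩ U).card < (S i ∩ U).card := lt_of_le_of_lt hle h1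
            simp [h1, h2]
          · simp only [if_neg h1]
            by_cases h2 : (S' j ∩ U).card < (S i ∩ U).card
            · simp only [if_pos h2]
              exact Or.inr ⟨trivial, hij, le_of_not_gt h1⟩
            · simp [h2]
      · rw [hS b hbjj]
        by_cases hij : i = j
        · rw [hij]
          by_cases h1 : (S b ∩ U).card < (S' j ∩ U).card
          · have h2 : (S b ∩ U).card < (S j ∩ U).card := lt_of_lt_of_le h1 hle
            simp [h1, h2]
          · simp only [if_neg h1]
            by_cases h2 : (S b ∩ U).card < (S j ∩ U).card
            · simp only [if_pos h2]
              exact Or.inr ⟨trivial, hbjj, le_of_lt h2⟩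
            · simp [h2]
        · rw [hS i hij]; simp
    · -- diverged: b = j, b' ≠ j
      rw [hbj2]
      rw [hS b' hb']
      by_cases hij : i = j
      · rw [hij]
        simp only [ite_self]
        by_cases h1 : (S b' ∩ U).card < (S' j ∩ U).card
        · simp only [if_pos h1]
          exact Or.inl trivial
        · simp only [if_neg h1]
          exact Or.inr ⟨trivial, hb', hc⟩
      · rw [hS i hij]
        by_cases h1 : (S j ∩ U).card < (S i ∩ U).card
        · have h2 : (S b' ∩ U).card < (S i ∩ U).card := lt_of_le_of_lt hc h1
          simp [h1, h2]
        · simp only [if_neg h1]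
          by_cases h2 : (S b' ∩ U).card < (S i ∩ U).card
          · simp only [if_pos h2]
            exact Or.inr ⟨trivial, hij, le_of_not_gt h1⟩
          · simp only [if_neg h2]
            exact Or.inr ⟨trivial, hb', hc⟩

lemma sdiff_ssubset_inter {U T : Finset α} (h : (T ∩ U).Nonempty) : U \ T ⊂ U := by
  have he : U \ T = U \ (T ∩ U) := by
    ext a; simp only [mem_sdiff, mem_inter]; tauto
  rw [he]
  exact Finset.sdiff_ssubset inter_subset_right h

lemma greedyList_congr (S S' : Fin m → Finset α) :
    ∀ (U : Finset α), (∀ k, S' k ∩ U = S k ∩ U) →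
      ∀ order, greedyList S' order U = greedyList S order U := by
  intro U
  induction U using Finset.strongInductionOn with
  | _ U ih =>
    intro h order
    cases order with
    | nil => rw [greedyList, greedyList]
    | cons b rest =>
      conv_lhs => rw [greedyList]
      conv_rhs => rw [greedyList]
      have hb : bestIdx S' U rest b = bestIdx S U rest b :=
        bestIdx_congr_eq S S' U (fun k => by rw [h k]) rest b
      simp only [hb]
      set best := bestIdx S U rest b with hbest
      have hne : (S' best ∩ U).Nonempty ↔ (S best ∩ U).Nonempty := by rw [h best]
      by_cases hc : (S best ∩ U).Nonempty
      · rw [dif_pos hc, dif_pos (hne.mpr hc)]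
        have hUs : U \ S' best = U \ S best := by
          ext a
          simp only [mem_sdiff]
          refine and_congr_right fun ha => not_congr ?_
          constructor
          · intro h2
            have h3 : a ∈ S' best ∩ U := mem_inter.mpr ⟨h2, ha⟩
            rw [h best] at h3
            exact (mem_inter.mp h3).1
          · intro h2
            have h3 : a ∈ S best ∩ U := mem_inter.mpr ⟨h2, ha⟩
            rw [← h best] at h3
            exact (mem_inter.mp h3).1
        rw [hUs]
        have h' : ∀ k, S' k ∩ (U \ S best) = S k ∩ (U \ S best) := by
          intro k
          ext a
          simp only [mem_inter, mem_sdiff]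
          constructor
          · rintro ⟨h1, h2, h3⟩
            have h4 : a ∈ S' k ∩ U := mem_inter.mpr ⟨h1, h2⟩
            rw [h k] at h4
            exact ⟨(mem_inter.mp h4).1, h2, h3⟩
          · rintro ⟨h1, h2, h3⟩
            have h4 : a ∈ S k ∩ U := mem_inter.mpr ⟨h1, h2⟩
            rw [← h k] at h4
            exact ⟨(mem_inter.mp h4).1, h2, h3⟩
        rw [ih (U \ S best) (sdiff_ssubset_inter hc) h' (b :: rest)]
      · rw [dif_neg hc, dif_neg (fun hx => hc (hne.mp hx))]

lemma greedy_sel_nonempty (S : Fin m → Finset α) :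
    ∀ (U : Finset α) (order : List (Fin m)) (k : Fin m),
      k ∈ greedyList S order U → (S k).Nonempty := by
  intro U
  induction U using Finset.strongInductionOn with
  | _ U ih =>
    intro order k hk
    cases order with
    | nil => rw [greedyList] at hk; simp at hk
    | cons b rest =>
      rw [greedyList] at hk
      by_cases hc : (S (bestIdx S U rest b) ∩ U).Nonempty
      · rw [dif_pos hc] at hk
        rcases List.mem_cons.mp hk with rfl | hk
        · obtain ⟨x, hx⟩ := hc
          exact ⟨x, (mem_inter.mp hx).1⟩
        · exact ih _ (sdiff_ssubset_inter hc) _ _ hk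
      · rw [dif_neg hc] at hk
        simp at hk

lemma greedy_covers (S : Fin m → Finset α) :
    ∀ (U : Finset α) (order : List (Fin m)) (i : Fin m) (x : α),
      i ∈ order → x ∈ S i → x ∈ U →
      ∃ k, k ∈ greedyList S order U ∧ x ∈ S k := by
  intro U
  induction U using Finset.strongInductionOn with
  | _ U ih =>
    intro order i x hio hxi hxU
    cases order with
    | nil => simp at hio
    | cons b rest =>
      rw [greedyList]
      set best := bestIdx S U rest b with hbest
      have hc : (S best ∩ U).Nonempty := by
        have h1 : (S i ∩ U).card ≤ (S best ∩ U).card := by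
          refine bestIdx_le S U rest b i ?_
          rcases List.mem_cons.mp hio with h | h
          · exact Or.inl h
          · exact Or.inr h
        have h2 : 0 < (S i ∩ U).card :=
          Finset.card_pos.mpr ⟨x, mem_inter.mpr ⟨hxi, hxU⟩⟩
        exact Finset.card_pos.mp (lt_of_lt_of_le h2 h1)
      rw [dif_pos hc]
      by_cases hxb : x ∈ S best
      · exact ⟨best, List.mem_cons_self, hxb⟩
      · obtain ⟨k, hk1, hk2⟩ := ih (U \ S best) (sdiff_ssubset_inter hc) (b :: rest) i x hio hxi
          (mem_sdiff.mpr ⟨hxU, hxb⟩)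
        exact ⟨k, List.mem_cons_of_mem _ hk1, hk2⟩

lemma greedy_surgery (S : Fin m → Finset α) (j : Fin m) (x : α) (hxj : x ∈ S j) :
    ∀ (U : Finset α) (order : List (Fin m)) (s t : List (Fin m)),
      greedyList S order U = s ++ j :: t → j ∉ s →
      (x ∉ U ∨ ∃ k, k ∈ s ∧ x ∈ S k) →
      j ∈ greedyList (Function.update S j (S j \ {x})) order U := by
  intro U
  induction U using Finset.strongInductionOn with
  | _ U ih =>
    intro order s t hL hjs hcond
    set S' : Fin m → Finset α := Function.update S j (S j \ {x}) with hS'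
    have hSk : ∀ k, k ≠ j → S' k = S k := fun k hk => Function.update_of_ne hk _ _
    have hSj : S' j = S j \ {x} := Function.update_self _ _ _
    rcases hcond with hxU | ⟨k, hks, hxk⟩
    · -- x not in U : runs are identical
      have hcongr : ∀ k, S' k ∩ U = S k ∩ U := by
        intro k
        by_cases hk : k = j
        · subst hk
          rw [hSj]
          ext a
          simp only [mem_inter, mem_sdiff, mem_singleton]
          constructor
          · rintro ⟨⟨h1, _⟩, h2⟩; exact ⟨h1, h2⟩
          · rintro ⟨h1, h2⟩
            refine ⟨⟨h1, ?_⟩, h2⟩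
            rintro rfl; exact hxU h2
        · rw [hSk k hk]
      rw [greedyList_congr S S' U hcongr order, hL]
      simp
    · -- x in some S k with k selected before j
      cases order with
      | nil =>
        rw [greedyList] at hL
        simp at hL
      | cons b rest =>
        rw [greedyList] at hL
        set best := bestIdx S U rest b with hbest
        by_cases hc : (S best ∩ U).Nonempty
        · rw [dif_pos hc] at hL
          -- s must be nonempty, since k ∈ s
          cases s with
          | nil => simp at hks
          | cons s0 s1 =>
            simp only [List.cons_append, List.cons.injEq] at hL
            obtain ⟨hb0, hL'⟩ := hL
            have hbj : best ≠ j := by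
              rw [hb0]
              intro hcon
              exact hjs (by rw [hcon]; exact List.mem_cons_self)
            -- compute the deviated run
            have hb' : bestIdx S' U rest b = best := by
              refine bestIdx_congr S S' U j hSk ?_ rest b b (Or.inl rfl) ?_
              · rw [hSj]
                exact Finset.card_le_card (Finset.inter_subset_inter (Finset.sdiff_subset) le_rfl)
              · rw [← hbest]; exact hbj
            rw [greedyList, hb']
            have hc' : (S' best ∩ U).Nonempty := by rw [hSk best hbj]; exact hc
            rw [dif_pos hc']
            rw [hSk best hbj]
            refine List.mem_cons_of_mem _ ?_
            refine ih (U \ S best) (sdiff_ssubset_inter hc) (b :: rest) s1 t hL'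
              (fun hcon => hjs (List.mem_cons_of_mem _ hcon)) ?_
            by_cases hxb : x ∈ S best
            · exact Or.inl (fun hmem => (mem_sdiff.mp hmem).2 hxb)
            · refine Or.inr ⟨k, ?_, hxk⟩
              rcases List.mem_cons.mp hks with rfl | hk1
              · exact absurd (hb0 ▸ hxb) (fun h => h hxk)
              · exact hk1
        · rw [dif_neg hc] at hL
          simp at hL

lemma first_occ {β : Type*} [DecidableEq β] {a : β} :
    ∀ {l : List β}, a ∈ l → ∃ s t, l = s ++ a :: t ∧ a ∉ s := by
  intro l
  induction l with
  | nil => intro h; simp at h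
  | cons b l ih =>
    intro h
    by_cases hb : a = b
    · exact ⟨[], l, by simp [hb], by simp⟩
    · have hal : a ∈ l := by
        rcases List.mem_cons.mp h with h' | h'
        · exact absurd h' hb
        · exact h'
      obtain ⟨s, t, hst, hns⟩ := ih hal
      exact ⟨b :: s, t, by rw [hst]; rfl, by simp [hns, hb]⟩

lemma two_split {β : Type*} [DecidableEq β] {p q : β} (hpq : p ≠ q) :
    ∀ {l : List β}, p ∈ l → q ∈ l →
      (∃ s t, l = s ++ p :: t ∧ p ∉ s ∧ q ∈ s) ∨
      (∃ s t, l = s ++ q :: t ∧ q ∉ s ∧ p ∈ s) := by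
  intro l
  induction l with
  | nil => intro h; simp at h
  | cons b l ih =>
    intro hp hq
    by_cases hbp : b = p
    · right
      have hql : q ∈ l := by
        rcases List.mem_cons.mp hq with h' | h'
        · exact absurd (h'.trans hbp).symm hpq
        · exact h'
      obtain ⟨s, t, hst, hns⟩ := first_occ hql
      refine ⟨b :: s, t, by rw [hst]; rfl, ?_, by rw [hbp]; exact List.mem_cons_self⟩
      simp only [List.mem_cons, not_or]
      exact ⟨fun h => hpq (h.trans hbp).symm, hns⟩
    · by_cases hbq : b = q
      · left
        have hpl : p ∈ l := by
          rcases List.mem_cons.mp hp with h' | h'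
          · exact absurd (h'.trans hbq) hpq
          · exact h'
        obtain ⟨s, t, hst, hns⟩ := first_occ hpl
        refine ⟨b :: s, t, by rw [hst]; rfl, ?_, by rw [hbq]; exact List.mem_cons_self⟩
        simp only [List.mem_cons, not_or]
        exact ⟨fun h => hpq (h.trans hbq), hns⟩
      · have hpl : p ∈ l := by
          rcases List.mem_cons.mp hp with h' | h'
          · exact absurd h'.symm hbp
          · exact h'
        have hql : q ∈ l := by
          rcases List.mem_cons.mp hq with h' | h'
          · exact absurd h'.symm hbq
          · exact h'
        rcases ih hpl hql with ⟨s, t, hst, hns, hqs⟩ | ⟨s, t, hst, hns, hps⟩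
        · exact Or.inl ⟨b :: s, t, by rw [hst]; rfl,
            by simp only [List.mem_cons, not_or]; exact ⟨fun h => hbp h.symm, hns⟩,
            List.mem_cons_of_mem _ hqs⟩
        · exact Or.inr ⟨b :: s, t, by rw [hst]; rfl,
            by simp only [List.mem_cons, not_or]; exact ⟨fun h => hbq h.symm, hns⟩,
            List.mem_cons_of_mem _ hps⟩

lemma mem_cover_of_nonempty {beta alpha : ℝ} (halpha : 0 < alpha)
    {S : Fin m → Finset α} (hNE : IsNashD beta alpha S) {i : Fin m}
    (hne : (S i).Nonempty) : i ∈ coverD S := by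
  by_contra hcov
  have h1 := hNE i ∅
  have h2 : i ∉ coverD (Function.update S i ∅) := by
    intro hmem
    have h3 := greedy_sel_nonempty (Function.update S i ∅)
      (unionSet (Function.update S i ∅)) (List.finRange m) i (List.mem_toFinset.mp hmem)
    rw [Function.update_self] at h3
    exact Finset.not_nonempty_empty h3
  rw [utilD, utilD, if_neg h2, if_neg hcov, Function.update_self] at h1
  simp only [Finset.card_empty, Nat.cast_zero, mul_zero, sub_zero] at h1
  have hpos : 0 < alpha * ((S i).card : ℝ) := by
    apply mul_pos halpha
    exact_mod_cast Finset.card_pos.mpr hne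
  linarith

lemma no_share {beta alpha : ℝ} (halpha : 0 < alpha)
    {S : Fin m → Finset α} (hNE : IsNashD beta alpha S) {j k : Fin m} {x : α}
    (hkj : k ≠ j) (hxj : x ∈ S j) (hxk : x ∈ S k)
    {s t : List (Fin m)}
    (hL : greedyList S (List.finRange m) (unionSet S) = s ++ j :: t)
    (hjs : j ∉ s) (hks : k ∈ s) : False := by
  have hjmem : j ∈ greedyList (Function.update S j (S j \ {x}))
      (List.finRange m) (unionSet S) :=
    greedy_surgery S j x hxj (unionSet S) _ s t hL hjs (Or.inr ⟨k, hks, hxk⟩)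
  have hUU : unionSet (Function.update S j (S j \ {x})) = unionSet S := by
    ext a
    simp only [unionSet, Finset.mem_biUnion, Finset.mem_univ, true_and]
    constructor
    · rintro ⟨i, hi⟩
      by_cases hij : i = j
      · rw [hij, Function.update_self] at hi
        exact ⟨j, (Finset.mem_sdiff.mp hi).1⟩
      · rw [Function.update_of_ne hij] at hi
        exact ⟨i, hi⟩
    · rintro ⟨i, hi⟩
      by_cases hij : i = j
      · rw [hij] at hi
        by_cases hax : a = x
        · exact ⟨k, by rw [Function.update_of_ne hkj, hax]; exact hxk⟩
        · exact ⟨j, by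
            rw [Function.update_self]
            exact Finset.mem_sdiff.mpr ⟨hi, by simp [hax]⟩⟩
      · exact ⟨i, by rw [Function.update_of_ne hij]; exact hi⟩
  have hjcov' : j ∈ coverD (Function.update S j (S j \ {x})) := by
    rw [coverD, List.mem_toFinset, hUU]
    exact hjmem
  have hjcov : j ∈ coverD S := by
    rw [coverD, List.mem_toFinset, hL]
    simp
  have h1 := hNE j (S j \ {x})
  rw [utilD, utilD, if_pos hjcov', if_pos hjcov, Function.update_self] at h1
  have h1le : 1 ≤ (S j).card := Finset.card_pos.mpr ⟨x, hxj⟩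
  have hcast : ((S j \ {x}).card : ℝ) = ((S j).card : ℝ) - 1 := by
    rw [Finset.card_sdiff_of_subset (Finset.singleton_subset_iff.mpr hxj), Finset.card_singleton,
      Nat.cast_sub h1le, Nat.cast_one]
  rw [hcast] at h1
  linarith


end Proof

/-- With the deterministic greedy algorithm, there is no pure Nash
equilibrium in which some agent's strategy has more than one element. -/
theorem scigD_no_big_strategy {α : Type*} [DecidableEq α] {m : ℕ}
    (beta alpha : ℝ) (hbeta : 0 < beta) (halpha : 0 < alpha) :
    ¬ ∃ S : Fin m → Finset α, IsNashD beta alpha S ∧ ∃ i : Fin m, 1 < (S i).card := by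

  rintro ⟨S, hNE, i, hcard⟩
  have hne : (S i).Nonempty := Finset.card_pos.mp (by omega)
  obtain ⟨x, hxi⟩ := hne
  have hicov : i ∈ coverD S := mem_cover_of_nonempty halpha hNE ⟨x, hxi⟩
  have hiL : i ∈ greedyList S (List.finRange m) (unionSet S) := List.mem_toFinset.mp hicov
  have honly : ∀ k, k ≠ i → x ∉ S k := by
    intro k hki hxk
    have hkcov : k ∈ coverD S := mem_cover_of_nonempty halpha hNE ⟨x, hxk⟩
    have hkL : k ∈ greedyList S (List.finRange m) (unionSet S) := List.mem_toFinset.mp hkcov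
    rcases two_split (show i ≠ k from fun h => hki h.symm) hiL hkL with
      ⟨s, t, hst, hns, hmem⟩ | ⟨s, t, hst, hns, hmem⟩
    · exact no_share halpha hNE hki hxi hxk hst hns hmem
    · exact no_share halpha hNE (fun h => hki h.symm) hxk hxi hst hns hmem
  -- deviation to the singleton {x}
  have hxU' : x ∈ unionSet (Function.update S i {x}) :=
    Finset.mem_biUnion.mpr ⟨i, Finset.mem_univ _, by
      rw [Function.update_self]; exact Finset.mem_singleton_self x⟩
  obtain ⟨kk, hkk1, hkk2⟩ := greedy_covers (Function.update S i {x})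
    (unionSet (Function.update S i {x})) (List.finRange m) i x (List.mem_finRange i)
    (by rw [Function.update_self]; exact Finset.mem_singleton_self x) hxU'
  have hkki : kk = i := by
    by_contra hne2
    rw [Function.update_of_ne hne2] at hkk2
    exact honly kk hne2 hkk2
  rw [hkki] at hkk1
  have hicov' : i ∈ coverD (Function.update S i {x}) := List.mem_toFinset.mpr hkk1
  have h1 := hNE i {x}
  rw [utilD, utilD, if_pos hicov', if_pos hicov, Function.update_self] at h1
  rw [Finset.card_singleton, Nat.cast_one] at h1
  have h2c : (2 : ℝ) ≤ ((S i).card : ℝ) := by exact_mod_cast (by omega : 2 ≤ (S i).card)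
  have h3 := mul_le_mul_of_nonneg_left h2c halpha.le
  linarith
end

section
/- In the set-cover instance game with the non-deterministic greedy algorithm, if m ≤ n and α < β, then any joint strategy in which all m agents choose pairwise distinct single-element subsets is a pure Nash equilibrium. -/
open Finset

section SCIGAux
variable {α : Type*} [DecidableEq α] {m : ℕ}

lemma bestIdx_spec (S : Fin m → Finset α) (U : Finset α) :
    ∀ (l : List (Fin m)) (b j : Fin m), (j = b ∨ j ∈ l) →
      (S j ∩ U).card ≤ (S (bestIdx S U l b) ∩ U).card := by
  intro l
  induction l with
  | nil =>
    rintro b j (rfl | h)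
    · simp [bestIdx]
    · simp at h
  | cons i rest ih =>
    intro b j hj
    rw [bestIdx]
    rcases hj with rfl | hj
    · refine le_trans ?_ (ih _ _ (Or.inl rfl))
      split
      · exact le_of_lt ‹_›
      · exact le_rfl
    · rcases List.mem_cons.mp hj with rfl | hj
      · refine le_trans ?_ (ih _ _ (Or.inl rfl))
        split
        · exact le_rfl
        · exact le_of_not_gt ‹_›
      · exact ih _ _ (Or.inr hj)

lemma sdiff_ssub (U T : Finset α) (h : (T ∩ U).Nonempty) : U \ T ⊂ U := by
  refine ⟨Finset.sdiff_subset, fun hsub => ?_⟩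
  obtain ⟨x, hx⟩ := h
  have hx1 := (Finset.mem_inter.mp hx).1
  have hx2 := (Finset.mem_inter.mp hx).2
  have := hsub hx2
  simp [Finset.mem_sdiff, hx1] at this

lemma mem_greedy_singletons (S : Fin m → Finset α) (e : Fin m → α)
    (he : ∀ j, S j = {e j}) (hinj : Function.Injective e) (Ucov : Finset α) :
    ∀ (order : List (Fin m)) (i : Fin m),
      i ∈ order → e i ∈ Ucov → i ∈ greedyList S order Ucov := by
  induction Ucov using Finset.strongInductionOn with
  | _ Ucov ih =>
    intro order i hi hei
    match order with
    | [] => simp at hi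
    | b :: rest =>
      rw [greedyList]
      set best := bestIdx S Ucov rest b with hb
      have hspec := bestIdx_spec S Ucov rest b i
        (by rcases List.mem_cons.mp hi with rfl | h; exacts [Or.inl rfl, Or.inr h])
      rw [← hb] at hspec
      have hci : (S i ∩ Ucov).card = 1 := by
        rw [he i, Finset.singleton_inter_of_mem hei, Finset.card_singleton]
      have hne : (S best ∩ Ucov).Nonempty := by
        rw [← Finset.card_pos]; omega
      rw [dif_pos hne]
      by_cases hbi : best = i
      · rw [hbi]; exact List.mem_cons_self
      · refine List.mem_cons_of_mem _ (ih _ (sdiff_ssub _ _ hne) _ i hi ?_)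
        rw [he best, Finset.mem_sdiff]
        refine ⟨hei, fun h => hbi (hinj (Finset.mem_singleton.mp h)).symm⟩

lemma nonempty_of_mem_greedy (S : Fin m → Finset α) (Ucov : Finset α) :
    ∀ (order : List (Fin m)) (i : Fin m),
      i ∈ greedyList S order Ucov → (S i).Nonempty := by
  induction Ucov using Finset.strongInductionOn with
  | _ Ucov ih =>
    intro order i hi
    match order with
    | [] => simp [greedyList] at hi
    | b :: rest =>
      rw [greedyList] at hi
      set best := bestIdx S Ucov rest b with hb
      by_cases h : (S best ∩ Ucov).Nonempty
      · rw [dif_pos h] at hi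
        rcases List.mem_cons.mp hi with rfl | hi
        · obtain ⟨x, hx⟩ := h
          exact ⟨x, (Finset.mem_inter.mp hx).1⟩
        · exact ih _ (sdiff_ssub _ _ h) _ _ hi
      · rw [dif_neg h] at hi
        simp at hi

end SCIGAux

/-- With the non-deterministic greedy algorithm, if m ≤ n and
α < β, any joint strategy of pairwise distinct single-element subsets is a
pure Nash equilibrium. -/
theorem scigN_distinct_singletons_nash {α : Type*} [Fintype α] [DecidableEq α] {m : ℕ}
    (beta alpha : ℝ) (hbeta : 0 < beta) (halpha : 0 < alpha)
    (hmn : m ≤ Fintype.card α) (hab : alpha < beta)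
    (S : Fin m → Finset α)
    (hsing : ∀ i : Fin m, ∃ e : α, S i = {e})
    (hdist : ∀ i j : Fin m, i ≠ j → S i ≠ S j) :
    IsNashN beta alpha S := by
  choose e he using hsing
  have hinj : Function.Injective e := by
    intro i j h
    by_contra hne
    exact hdist i j hne (by rw [he i, he j, h])
  have hfact : (0:ℝ) < (Nat.factorial m : ℝ) := by exact_mod_cast m.factorial_pos
  intro i T
  have hle1 : ∀ S' : Fin m → Finset α, probSel S' i ≤ 1 := by
    intro S'
    unfold probSel
    rw [div_le_one hfact]
    have h1 : (Finset.univ.filter (fun π : Equiv.Perm (Fin m) =>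
        i ∈ greedyList S' ((List.finRange m).map π) (unionSet S'))).card
        ≤ Fintype.card (Equiv.Perm (Fin m)) := by
      rw [← Finset.card_univ]
      exact Finset.card_filter_le _ _
    rw [Fintype.card_perm, Fintype.card_fin] at h1
    exact_mod_cast h1
  have hge0 : ∀ S' : Fin m → Finset α, 0 ≤ probSel S' i := by
    intro S'
    unfold probSel
    positivity
  have hself : probSel S i = 1 := by
    unfold probSel
    have hfilt : (Finset.univ.filter (fun π : Equiv.Perm (Fin m) =>
        i ∈ greedyList S ((List.finRange m).map π) (unionSet S))) = Finset.univ := by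
      rw [Finset.filter_eq_self]
      intro π _
      apply mem_greedy_singletons S e he hinj
      · exact List.mem_map.mpr ⟨π.symm i, List.mem_finRange _, by simp⟩
      · exact Finset.mem_biUnion.mpr ⟨i, Finset.mem_univ i,
          by rw [he i]; exact Finset.mem_singleton_self _⟩
    rw [hfilt, Finset.card_univ, Fintype.card_perm, Fintype.card_fin]
    exact div_self (ne_of_gt hfact)
  have hSi : ((S i).card : ℝ) = 1 := by rw [he i, Finset.card_singleton, Nat.cast_one]
  set S' := Function.update S i T with hS'
  have hS'i : S' i = T := Function.update_self i T S
  unfold utilN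
  rw [hself, hSi, hS'i]
  rcases T.eq_empty_or_nonempty with rfl | hT
  · have hzero : probSel S' i = 0 := by
      unfold probSel
      have hfilt : (Finset.univ.filter (fun π : Equiv.Perm (Fin m) =>
          i ∈ greedyList S' ((List.finRange m).map π) (unionSet S'))) = ∅ := by
        rw [Finset.filter_eq_empty_iff]
        intro π _ hmem
        have := nonempty_of_mem_greedy S' (unionSet S') _ i hmem
        rw [hS'i] at this
        exact Finset.not_nonempty_empty this
      rw [hfilt, Finset.card_empty, Nat.cast_zero, zero_div]
    rw [hzero]
    simp only [Finset.card_empty, Nat.cast_zero]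
    nlinarith
  · have hT1 : (1:ℝ) ≤ (T.card : ℝ) := by
      exact_mod_cast Finset.card_pos.mpr hT
    have h1 := mul_le_mul_of_nonneg_left (hle1 S') (le_of_lt hbeta)
    have h2 := mul_le_mul_of_nonneg_left hT1 (le_of_lt halpha)
    nlinarith
end

section
/- In the set-cover instance game with the non-deterministic greedy algorithm, if α = β/2, then the joint strategy in which each element e_k of U is chosen as the single-element strategy of exactly two agents (assuming m = 2n) is a pure Nash equilibrium. -/
open Finset

section AuxSCIG

variable {α : Type*} [DecidableEq α] {m : ℕ}

/-- The boolean predicate: agent `j`'s set still covers something. -/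
def pNE (S : Fin m → Finset α) (U : Finset α) (j : Fin m) : Bool :=
  decide (S j ∩ U).Nonempty

lemma aux_find?_first {β : Type*} [DecidableEq β] (p : β → Bool) :
    ∀ (L : List β) (w : β), L.find? p = some w →
      w ∈ L ∧ p w = true ∧ ∀ j ∈ L, L.idxOf j < L.idxOf w → ¬ p j = true := by
  intro L
  induction L with
  | nil => simp
  | cons a l ih =>
    intro w h
    by_cases hpa : p a = true
    · rw [List.find?_cons_of_pos hpa] at h
      obtain rfl : a = w := by injection h
      refine ⟨List.mem_cons_self, hpa, ?_⟩
      intro j hj hlt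
      rw [List.idxOf_cons_self] at hlt
      omega
    · rw [List.find?_cons_of_neg hpa] at h
      obtain ⟨hw, hpw, hfirst⟩ := ih w h
      have haw : a ≠ w := fun e => hpa (e ▸ hpw)
      refine ⟨List.mem_cons_of_mem _ hw, hpw, ?_⟩
      intro j hj hlt
      rw [List.idxOf_cons_ne _ haw] at hlt
      rcases List.mem_cons.mp hj with rfl | hjl
      · exact hpa
      · by_cases hja : a = j
        · exact hja ▸ hpa
        · rw [List.idxOf_cons_ne _ hja] at hlt
          exact hfirst j hjl (Nat.lt_of_succ_lt_succ hlt)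

lemma aux_bestIdx_eq (S : Fin m → Finset α) (U : Finset α)
    (hcard : ∀ j, (S j ∩ U).card ≤ 1) :
    ∀ (l : List (Fin m)) (b : Fin m),
      bestIdx S U l b = ((b :: l).find? (pNE S U)).getD b := by
  intro l
  induction l with
  | nil =>
    intro b
    by_cases h : pNE S U b = true
    · rw [bestIdx, List.find?_cons_of_pos h, Option.getD_some]
    · rw [bestIdx, List.find?_cons_of_neg h, List.find?_nil, Option.getD_none]
  | cons i rest ih =>
    intro b
    rw [bestIdx]
    by_cases hb : pNE S U b = true
    · have hbne : (S b ∩ U).Nonempty := by simpa [pNE] using hb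
      have hbc : 0 < (S b ∩ U).card := Finset.card_pos.mpr hbne
      have hcond : ¬ (S b ∩ U).card < (S i ∩ U).card := by
        have := hcard i; omega
      rw [if_neg hcond, ih b, List.find?_cons_of_pos hb, List.find?_cons_of_pos hb]
    · have hbc : (S b ∩ U).card = 0 := by
        by_contra h
        exact hb (by simp [pNE, Finset.card_pos.mp (Nat.pos_of_ne_zero h)])
      rw [List.find?_cons_of_neg hb]
      by_cases hi : pNE S U i = true
      · have hine : (S i ∩ U).Nonempty := by simpa [pNE] using hi
        have hcond : (S b ∩ U).card < (S i ∩ U).card := by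
          have := Finset.card_pos.mpr hine; omega
        rw [if_pos hcond, ih i, List.find?_cons_of_pos hi]
        simp
      · have hic : (S i ∩ U).card = 0 := by
          by_contra h
          exact hi (by simp [pNE, Finset.card_pos.mp (Nat.pos_of_ne_zero h)])
        have hcond : ¬ (S b ∩ U).card < (S i ∩ U).card := by omega
        rw [if_neg hcond, ih b, List.find?_cons_of_neg hb, List.find?_cons_of_neg hi]

lemma aux_greedy_cons (S : Fin m → Finset α) (U : Finset α) (b : Fin m)
    (rest : List (Fin m)) :
    greedyList S (b :: rest) U =
      if (S (bestIdx S U rest b) ∩ U).Nonempty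
      then bestIdx S U rest b :: greedyList S (b :: rest) (U \ S (bestIdx S U rest b))
      else [] := by
  rw [greedyList]
  split <;> rfl

lemma aux_card_sdiff_lt {U T : Finset α} (h : (T ∩ U).Nonempty) :
    (U \ T).card < U.card := by
  apply Finset.card_lt_card
  refine ⟨Finset.sdiff_subset, fun hsub => ?_⟩
  obtain ⟨x, hx⟩ := h
  have hx1 := (Finset.mem_inter.mp hx).1
  have hx2 := (Finset.mem_inter.mp hx).2
  have := hsub hx2
  simp [Finset.mem_sdiff, hx1] at this

lemma aux_bestIdx_mem (S : Fin m → Finset α) (U : Finset α) :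
    ∀ (l : List (Fin m)) (b : Fin m), bestIdx S U l b ∈ b :: l := by
  intro l
  induction l with
  | nil => intro b; rw [bestIdx]; exact List.mem_cons_self
  | cons i rest ih =>
    intro b
    rw [bestIdx]
    split
    · have := ih i
      rcases List.mem_cons.mp this with h | h
      · rw [h]; exact List.mem_cons_of_mem _ (List.mem_cons_self)
      · exact List.mem_cons_of_mem _ (List.mem_cons_of_mem _ h)
    · have := ih b
      rcases List.mem_cons.mp this with h | h
      · rw [h]; exact List.mem_cons_self
      · exact List.mem_cons_of_mem _ (List.mem_cons_of_mem _ h)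

/-- Anything selected by greedy is in the scan list and has a nonempty set. -/
lemma aux_greedy_mem (S : Fin m → Finset α) :
    ∀ (n : ℕ) (U : Finset α), U.card ≤ n → ∀ (L : List (Fin m)) (i : Fin m),
      i ∈ greedyList S L U → i ∈ L ∧ (S i).Nonempty := by
  intro n
  induction n with
  | zero =>
    intro U hU L i hi
    have hUe : U = ∅ := Finset.card_eq_zero.mp (Nat.le_zero.mp hU)
    subst hUe
    cases L with
    | nil => simp [greedyList] at hi
    | cons b rest =>
      rw [aux_greedy_cons] at hi
      simp at hi
  | succ n ih =>
    intro U hU L i hi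
    cases L with
    | nil => simp [greedyList] at hi
    | cons b rest =>
      rw [aux_greedy_cons] at hi
      split at hi
      · rename_i h
        rcases List.mem_cons.mp hi with rfl | htail
        · exact ⟨aux_bestIdx_mem S U rest b, h.mono Finset.inter_subset_left⟩
        · have hlt : (U \ S (bestIdx S U rest b)).card ≤ n := by
            have := aux_card_sdiff_lt h
            omega
          exact ih _ hlt _ _ htail
      · simp at hi

/-- Main characterization: with all-singleton strategies, `i` is selected iff its
set meets the universe and no earlier agent in the scan order has the same set. -/
lemma aux_mem_greedy_iff (S : Fin m → Finset α) (hsing : ∀ j, ∃ e : α, S j = {e}) :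
    ∀ (n : ℕ) (U : Finset α), U.card ≤ n → ∀ (L : List (Fin m)) (i : Fin m),
      (i ∈ greedyList S L U ↔
        i ∈ L ∧ (S i ∩ U).Nonempty ∧
          ∀ j ∈ L, L.idxOf j < L.idxOf i → S j ≠ S i) := by
  intro n
  induction n with
  | zero =>
    intro U hU L i
    have hUe : U = ∅ := Finset.card_eq_zero.mp (Nat.le_zero.mp hU)
    subst hUe
    cases L with
    | nil => simp [greedyList]
    | cons b rest =>
      rw [aux_greedy_cons]
      simp
  | succ n ih =>
    intro U hU L i
    cases L with
    | nil => simp [greedyList]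
    | cons b rest =>
      have hcard : ∀ j, (S j ∩ U).card ≤ 1 := by
        intro j
        obtain ⟨e, he⟩ := hsing j
        calc (S j ∩ U).card ≤ (S j).card := Finset.card_le_card Finset.inter_subset_left
          _ = 1 := by rw [he]; simp
      rw [aux_greedy_cons, aux_bestIdx_eq S U hcard rest b]
      cases hfind : (b :: rest).find? (pNE S U) with
      | none =>
        have hall : ∀ j ∈ b :: rest, ¬ (S j ∩ U).Nonempty := by
          intro j hj
          have := List.find?_eq_none.mp hfind j hj
          simpa [pNE] using this
        rw [Option.getD_none, if_neg (hall b (List.mem_cons_self))]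
        simp only [List.not_mem_nil, false_iff, not_and]
        intro hiL hne
        exact absurd hne (hall i hiL)
      | some w =>
        obtain ⟨hwL, hpw, hfirst⟩ := aux_find?_first (pNE S U) _ _ hfind
        have hw : (S w ∩ U).Nonempty := by simpa [pNE] using hpw
        have hfirst' : ∀ j ∈ b :: rest,
            (b :: rest).idxOf j < (b :: rest).idxOf w → ¬ (S j ∩ U).Nonempty := by
          intro j hj hlt hne
          exact hfirst j hj hlt (by simpa [pNE] using hne)
        have hUlt : (U \ S w).card ≤ n := by
          have := aux_card_sdiff_lt hw
          omega
        rw [Option.getD_some, if_pos hw]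
        constructor
        · intro hmem
          rcases List.mem_cons.mp hmem with rfl | htail
          · refine ⟨hwL, hw, fun j hj hlt hSj => ?_⟩
            exact hfirst' j hj hlt (by rw [hSj]; exact hw)
          · obtain ⟨hiL, hne, hcond⟩ := (ih _ hUlt _ i).mp htail
            exact ⟨hiL, hne.mono (Finset.inter_subset_inter le_rfl Finset.sdiff_subset),
              hcond⟩
        · rintro ⟨hiL, hne, hcond⟩
          by_cases hiw : i = w
          · subst hiw; exact List.mem_cons_self
          · have hidxne : (b :: rest).idxOf i ≠ (b :: rest).idxOf w := by
              intro h
              exact hiw ((List.idxOf_inj hiL).mp h)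
            have hwi : (b :: rest).idxOf w < (b :: rest).idxOf i := by
              rcases Nat.lt_or_ge ((b :: rest).idxOf i) ((b :: rest).idxOf w) with h | h
              · exact absurd hne (hfirst' i hiL h)
              · omega
            have hSwi : S w ≠ S i := hcond w hwL hwi
            refine List.mem_cons_of_mem _ ((ih _ hUlt _ i).mpr ⟨hiL, ?_, hcond⟩)
            obtain ⟨e, he⟩ := hsing i
            obtain ⟨e', he'⟩ := hsing w
            have hee' : e ≠ e' := by
              intro h
              exact hSwi (by rw [he, he', h])
            obtain ⟨x, hx⟩ := hne
            have hx1 : x ∈ S i := (Finset.mem_inter.mp hx).1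
            have hx2 : x ∈ U := (Finset.mem_inter.mp hx).2
            have hxe : x = e := by
              rw [he] at hx1; exact Finset.mem_singleton.mp hx1
            refine ⟨x, Finset.mem_inter.mpr ⟨hx1, Finset.mem_sdiff.mpr ⟨hx2, ?_⟩⟩⟩
            rw [he', Finset.mem_singleton, hxe]
            exact hee'

lemma aux_indexOf_mapRange {m : ℕ} (π : Equiv.Perm (Fin m)) (a : Fin m) :
    ((List.finRange m).map π).idxOf a = (π.symm a : ℕ) := by
  have hnd : ((List.finRange m).map π).Nodup :=
    (List.nodup_finRange m).map π.injective
  have hlen : ((π.symm a : ℕ)) < ((List.finRange m).map π).length := by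
    simpa using (π.symm a).isLt
  have h1 := hnd.idxOf_getElem (π.symm a : ℕ) hlen
  have h2 : ((List.finRange m).map π)[(π.symm a : ℕ)] = a := by
    rw [List.getElem_map]
    have : (List.finRange m)[(π.symm a : ℕ)] = π.symm a := by
      apply Fin.ext
      simp [List.getElem_finRange]
    rw [this, Equiv.apply_symm_apply]
  rw [h2] at h1
  exact h1

lemma aux_mem_mapRange {m : ℕ} (π : Equiv.Perm (Fin m)) (a : Fin m) :
    a ∈ (List.finRange m).map π :=
  List.mem_map.mpr ⟨π.symm a, List.mem_finRange _, Equiv.apply_symm_apply π a⟩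

lemma aux_card_half {m : ℕ} (i j : Fin m) (hij : i ≠ j) :
    2 * ((Finset.univ.filter
        fun π : Equiv.Perm (Fin m) => (π.symm i : ℕ) < (π.symm j : ℕ)).card)
      = m.factorial := by
  classical
  set A := Finset.univ.filter
      fun π : Equiv.Perm (Fin m) => (π.symm i : ℕ) < (π.symm j : ℕ) with hA
  set B := Finset.univ.filter
      fun π : Equiv.Perm (Fin m) => (π.symm j : ℕ) < (π.symm i : ℕ) with hB
  have key : ∀ (π : Equiv.Perm (Fin m)) (k : Fin m),
      (Equiv.swap i j * π).symm k = π.symm (Equiv.swap i j k) := by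
    intro π k
    simp [Equiv.Perm.mul_def, Equiv.symm_trans_apply]
  have hswap : ∀ π : Equiv.Perm (Fin m), π ∈ A → Equiv.swap i j * π ∈ B := by
    intro π hπ
    rw [hA, Finset.mem_filter] at hπ
    rw [hB, Finset.mem_filter]
    refine ⟨Finset.mem_univ _, ?_⟩
    rw [key, key, Equiv.swap_apply_left, Equiv.swap_apply_right]
    exact hπ.2
  have hAB : A.card = B.card := by
    apply Finset.card_bij (fun π _ => Equiv.swap i j * π) hswap
    · intro π₁ h₁ π₂ h₂ h
      exact mul_left_cancel h
    · intro ρ hρ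
      refine ⟨Equiv.swap i j * ρ, ?_, ?_⟩
      · rw [hA, Finset.mem_filter]
        rw [hB, Finset.mem_filter] at hρ
        refine ⟨Finset.mem_univ _, ?_⟩
        rw [key, key, Equiv.swap_apply_left, Equiv.swap_apply_right]
        exact hρ.2
      · rw [← mul_assoc, Equiv.swap_mul_self, one_mul]
  have hBneg : B = Finset.univ.filter
      fun π : Equiv.Perm (Fin m) => ¬ ((π.symm i : ℕ) < (π.symm j : ℕ)) := by
    rw [hB]
    apply Finset.filter_congr
    intro π _
    have hne : π.symm i ≠ π.symm j := fun h => hij (π.symm.injective h)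
    have hne' : (π.symm i : ℕ) ≠ (π.symm j : ℕ) := fun h => hne (Fin.ext h)
    constructor
    · intro h; omega
    · intro h; omega
  have hsum : A.card + B.card = m.factorial := by
    rw [hBneg, hA]
    rw [Finset.card_filter_add_card_filter_not]
    rw [Finset.card_univ, Fintype.card_perm, Fintype.card_fin]
  omega

end AuxSCIG


section AuxSCIG2

variable {α : Type*} [DecidableEq α] {m : ℕ}

lemma aux_factorial_pos_real : (0:ℝ) < (m.factorial : ℝ) := by
  exact_mod_cast m.factorial_pos

lemma aux_probSel_le_one (S : Fin m → Finset α) (i : Fin m) : probSel S i ≤ 1 := by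
  rw [probSel]
  rw [div_le_one aux_factorial_pos_real]
  have h := Finset.card_filter_le Finset.univ
      (fun π : Equiv.Perm (Fin m) =>
        i ∈ greedyList S ((List.finRange m).map π) (unionSet S))
  have h2 : (Finset.univ : Finset (Equiv.Perm (Fin m))).card = m.factorial := by
    rw [Finset.card_univ, Fintype.card_perm, Fintype.card_fin]
  exact_mod_cast h2 ▸ h

lemma aux_probSel_empty (S : Fin m → Finset α) (i : Fin m) (h : S i = ∅) :
    probSel S i = 0 := by
  rw [probSel]
  have : (Finset.univ.filter (fun π : Equiv.Perm (Fin m) =>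
      i ∈ greedyList S ((List.finRange m).map π) (unionSet S))) = ∅ := by
    apply Finset.eq_empty_of_forall_notMem
    intro π hπ
    have hmem := (Finset.mem_filter.mp hπ).2
    have := (aux_greedy_mem S (unionSet S).card (unionSet S) le_rfl _ i hmem).2
    rw [h] at this
    exact Finset.not_nonempty_empty this
  rw [this]
  simp

lemma aux_probSel_subset_half (S : Fin m → Finset α) (hsing : ∀ j, ∃ e : α, S j = {e})
    (i j1 : Fin m) (hj1 : j1 ≠ i) (hSeq : S j1 = S i) :
    probSel S i ≤ 1 / 2 := by
  have hsub : (Finset.univ.filter (fun π : Equiv.Perm (Fin m) =>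
        i ∈ greedyList S ((List.finRange m).map π) (unionSet S)))
      ⊆ (Finset.univ.filter
        fun π : Equiv.Perm (Fin m) => (π.symm i : ℕ) < (π.symm j1 : ℕ)) := by
    intro π hπ
    rw [Finset.mem_filter] at hπ ⊢
    refine ⟨Finset.mem_univ _, ?_⟩
    obtain ⟨hiL, hne, hcond⟩ :=
      (aux_mem_greedy_iff S hsing (unionSet S).card (unionSet S) le_rfl
        ((List.finRange m).map π) i).mp hπ.2
    have hj1L := aux_mem_mapRange π j1
    have hle : ¬ ((List.finRange m).map π).idxOf j1
        < ((List.finRange m).map π).idxOf i :=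
      fun hlt => (hcond j1 hj1L hlt) hSeq
    have hne' : ((List.finRange m).map π).idxOf i
        ≠ ((List.finRange m).map π).idxOf j1 :=
      fun h => hj1 ((List.idxOf_inj hiL).mp h).symm
    rw [aux_indexOf_mapRange, aux_indexOf_mapRange] at hle hne'
    omega
  have hcardle := Finset.card_le_card hsub
  have hhalf := aux_card_half i j1 hj1.symm
  rw [probSel, div_le_div_iff₀ aux_factorial_pos_real (by norm_num : (0:ℝ) < 2)]
  have key : 2 * (Finset.univ.filter (fun π : Equiv.Perm (Fin m) =>
      i ∈ greedyList S ((List.finRange m).map π) (unionSet S))).card ≤ m.factorial := by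
    omega
  have keyR := (Nat.cast_le (α := ℝ)).mpr key
  push_cast at keyR
  linarith

lemma aux_probSel_eq_half (S : Fin m → Finset α) (hsing : ∀ j, ∃ e : α, S j = {e})
    (i p : Fin m) (hpi : p ≠ i) (hSeq : S p = S i)
    (huniq : ∀ j, S j = S i → j = i ∨ j = p) :
    probSel S i = 1 / 2 := by
  have hfeq : (Finset.univ.filter (fun π : Equiv.Perm (Fin m) =>
        i ∈ greedyList S ((List.finRange m).map π) (unionSet S)))
      = (Finset.univ.filter
        fun π : Equiv.Perm (Fin m) => (π.symm i : ℕ) < (π.symm p : ℕ)) := by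
    apply Finset.ext
    intro π
    rw [Finset.mem_filter, Finset.mem_filter]
    constructor
    · rintro ⟨-, hmem⟩
      refine ⟨Finset.mem_univ _, ?_⟩
      obtain ⟨hiL, hne, hcond⟩ :=
        (aux_mem_greedy_iff S hsing (unionSet S).card (unionSet S) le_rfl
          ((List.finRange m).map π) i).mp hmem
      have hpL := aux_mem_mapRange π p
      have hle : ¬ ((List.finRange m).map π).idxOf p
          < ((List.finRange m).map π).idxOf i :=
        fun hlt => (hcond p hpL hlt) hSeq
      have hne' : ((List.finRange m).map π).idxOf i
          ≠ ((List.finRange m).map π).idxOf p :=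
        fun h => hpi ((List.idxOf_inj hiL).mp h).symm
      rw [aux_indexOf_mapRange, aux_indexOf_mapRange] at hle hne'
      omega
    · rintro ⟨-, hlt⟩
      refine ⟨Finset.mem_univ _, ?_⟩
      apply (aux_mem_greedy_iff S hsing (unionSet S).card (unionSet S) le_rfl
          ((List.finRange m).map π) i).mpr
      refine ⟨aux_mem_mapRange π i, ?_, ?_⟩
      · obtain ⟨e, he⟩ := hsing i
        refine ⟨e, Finset.mem_inter.mpr ⟨by rw [he]; exact Finset.mem_singleton_self e, ?_⟩⟩
        exact Finset.mem_biUnion.mpr ⟨i, Finset.mem_univ _,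
          by rw [he]; exact Finset.mem_singleton_self e⟩
      · intro j hjL hidx hSj
        rcases huniq j hSj with rfl | rfl
        · exact lt_irrefl _ hidx
        · rw [aux_indexOf_mapRange, aux_indexOf_mapRange] at hidx
          omega
  rw [probSel, hfeq]
  have hhalf := aux_card_half i p hpi.symm
  have hf : (m.factorial : ℝ) ≠ 0 := ne_of_gt aux_factorial_pos_real
  rw [div_eq_div_iff hf (by norm_num : (2:ℝ) ≠ 0)]
  have hhalfR := congrArg (Nat.cast : ℕ → ℝ) hhalf
  push_cast at hhalfR
  linarith

end AuxSCIG2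

/-- With the non-deterministic greedy algorithm, m = 2n and
α = β/2, the joint strategy in which every element of U is the single-element
strategy of exactly two agents is a pure Nash equilibrium. -/
theorem scigN_paired_singletons_nash {α : Type*} [Fintype α] [DecidableEq α] {m : ℕ}
    (beta alpha : ℝ) (hbeta : 0 < beta) (halpha : 0 < alpha)
    (hm : m = 2 * Fintype.card α) (hab : alpha = beta / 2)
    (S : Fin m → Finset α)
    (hsing : ∀ i : Fin m, ∃ e : α, S i = {e})
    (hpairs : ∀ e : α, (Finset.univ.filter (fun i : Fin m => S i = {e})).card = 2) :
    IsNashN beta alpha S := by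
  intro i T
  classical
  obtain ⟨e, he⟩ := hsing i
  -- the partner of i
  have hp2 := hpairs e
  have hi_mem : i ∈ Finset.univ.filter (fun j : Fin m => S j = {e}) := by
    simp [he]
  obtain ⟨p, hp_mem, hpi⟩ :=
    Finset.exists_mem_ne (by omega : 1 < (Finset.univ.filter
      (fun j : Fin m => S j = {e})).card) i
  have hSp : S p = {e} := (Finset.mem_filter.mp hp_mem).2
  have huniq : ∀ j : Fin m, S j = S i → j = i ∨ j = p := by
    intro j hj
    have hsub : ({i, p} : Finset (Fin m)) ⊆
        Finset.univ.filter (fun j : Fin m => S j = {e}) := by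
      intro x hx
      rcases Finset.mem_insert.mp hx with rfl | hx
      · exact hi_mem
      · rw [Finset.mem_singleton.mp hx]; exact hp_mem
    have hcard2 : ({i, p} : Finset (Fin m)).card = 2 := by
      rw [Finset.card_insert_of_notMem
        (by simp only [Finset.mem_singleton]; exact fun h => hpi h.symm)]
      simp
    have heq : Finset.univ.filter (fun j : Fin m => S j = {e}) = ({i, p} : Finset (Fin m)) :=
      (Finset.eq_of_subset_of_card_le hsub (by omega)).symm
    have : j ∈ Finset.univ.filter (fun j : Fin m => S j = {e}) := by
      rw [Finset.mem_filter]
      exact ⟨Finset.mem_univ _, by rw [hj, he]⟩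
    rw [heq] at this
    rcases Finset.mem_insert.mp this with h | h
    · exact Or.inl h
    · exact Or.inr (Finset.mem_singleton.mp h)
  have hRHS : utilN beta alpha S i = 0 := by
    rw [utilN, aux_probSel_eq_half S hsing i p hpi (by rw [hSp, he]) huniq, he]
    simp [hab]
    ring
  rw [hRHS]
  -- now show the deviation utility is ≤ 0
  set S' := Function.update S i T with hS'
  have hS'i : S' i = T := Function.update_self i T S
  by_cases hT0 : T = ∅
  · have : probSel S' i = 0 := aux_probSel_empty S' i (by rw [hS'i, hT0])
    rw [utilN, this, hS'i, hT0]
    simp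
  · rcases Nat.lt_or_ge T.card 2 with hTc | hTc
    · -- T is a singleton
      have hTc1 : T.card = 1 := by
        have := Finset.card_pos.mpr (Finset.nonempty_iff_ne_empty.mpr hT0)
        omega
      obtain ⟨f, rfl⟩ := Finset.card_eq_one.mp hTc1
      by_cases hfe : f = e
      · have : S' = S := by
          rw [hS', hfe, ← he]
          exact Function.update_eq_self i S
        rw [this, hRHS]
      · -- f ≠ e : at least the two original holders of f still hold it
        have hsing' : ∀ j : Fin m, ∃ g : α, S' j = {g} := by
          intro j
          by_cases hj : j = i
          · exact ⟨f, by rw [hj, hS'i]⟩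
          · exact (hsing j).imp (fun g hg => by rw [hS', Function.update_of_ne hj]; exact hg)
        have hf2 := hpairs f
        have : (Finset.univ.filter (fun j : Fin m => S j = {f})).Nonempty := by
          rw [← Finset.card_pos]; omega
        obtain ⟨j1, hj1mem⟩ := this
        have hSj1 : S j1 = {f} := (Finset.mem_filter.mp hj1mem).2
        have hj1i : j1 ≠ i := by
          intro h
          rw [h, he] at hSj1
          exact hfe (Finset.singleton_injective hSj1.symm)
        have hS'j1 : S' j1 = S' i := by
          rw [hS'i, hS', Function.update_of_ne hj1i, hSj1]
        have hple := aux_probSel_subset_half S' hsing' i j1 hj1i hS'j1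
        rw [utilN, hS'i]
        have : alpha * (({f} : Finset α).card : ℝ) = beta / 2 := by
          simp [hab]
        rw [this]
        nlinarith [hple, hbeta]
    · -- T has at least two elements
      have hple := aux_probSel_le_one S' i
      rw [utilN, hS'i]
      have h2 : (2 : ℝ) ≤ (T.card : ℝ) := by exact_mod_cast hTc
      have : beta ≤ alpha * (T.card : ℝ) := by
        rw [hab]; nlinarith
      nlinarith [hple, hbeta]
end

section
/- In the set-cover instance game with the non-deterministic greedy algorithm, for an integer ρ ≥ 2 with m > ρn and β/((1+ρ)n) < α ≤ β/(ρn), the joint strategy in which exactly ρ agents choose S_i = U and the remaining m − ρ agents choose the empty set is a pure Nash equilibrium. -/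
open Finset

section Aux

variable {α : Type*} [DecidableEq α] [Fintype α] {m : ℕ}

lemma bestIdx_of_full (S : Fin m → Finset α) (l : List (Fin m)) (b : Fin m)
    (hb : S b = Finset.univ) : bestIdx S Finset.univ l b = b := by
  induction l with
  | nil => rfl
  | cons i rest ih =>
      rw [bestIdx, if_neg]
      · exact ih
      · simp only [hb, Finset.inter_self, not_lt]
        exact Finset.card_le_univ _

lemma bestIdx_find (S : Fin m → Finset α) (l : List (Fin m)) (b j : Fin m)
    (h : (b :: l).find? (fun x => S x = Finset.univ) = some j) :
    bestIdx S Finset.univ l b = j := by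
  induction l generalizing b with
  | nil =>
      by_cases hb : S b = Finset.univ
      · rw [List.find?_cons_of_pos (p := fun x => decide (S x = Finset.univ)) (a := b) (by simpa using hb)] at h
        simp only [Option.some.injEq] at h
        simpa [bestIdx] using h
      · rw [List.find?_cons_of_neg (p := fun x => decide (S x = Finset.univ)) (a := b) (by simpa using hb)] at h
        simp at h
  | cons i rest ih =>
      by_cases hb : S b = Finset.univ
      · rw [List.find?_cons_of_pos (p := fun x => decide (S x = Finset.univ)) (a := b) (by simpa using hb)] at h
        simp only [Option.some.injEq] at h
        subst h
        rw [bestIdx, if_neg]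
        · exact bestIdx_of_full S rest b hb
        · simp only [hb, Finset.inter_self, not_lt]
          exact Finset.card_le_univ _
      · rw [List.find?_cons_of_neg (p := fun x => decide (S x = Finset.univ)) (a := b) (by simpa using hb)] at h
        by_cases hi : S i = Finset.univ
        · rw [List.find?_cons_of_pos (p := fun x => decide (S x = Finset.univ)) (a := i) (by simpa using hi)] at h
          simp only [Option.some.injEq] at h
          subst h
          rw [bestIdx, if_pos]
          · exact bestIdx_of_full S rest i hi
          · simp only [Finset.inter_univ, hi, Finset.inter_self]
            exact Finset.card_lt_card (Finset.ssubset_univ_iff.mpr hb)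
        · rw [List.find?_cons_of_neg (p := fun x => decide (S x = Finset.univ)) (a := i) (by simpa using hi)] at h
          rw [bestIdx]
          set b' := if (S b ∩ Finset.univ).card < (S i ∩ Finset.univ).card then i else b with hb'
          have hb'n : ¬ S b' = Finset.univ := by
            rw [hb']; split_ifs <;> assumption
          apply ih
          rw [List.find?_cons_of_neg (p := fun x => decide (S x = Finset.univ)) (a := b') (by simpa using hb'n)]
          exact h

omit [Fintype α] in
lemma greedyList_empty_ucov (S : Fin m → Finset α) (order : List (Fin m)) :
    greedyList S order (∅ : Finset α) = [] := by
  cases order with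
  | nil => rw [greedyList]
  | cons b rest => rw [greedyList]; simp

lemma greedyList_eq_single (S : Fin m → Finset α) (order : List (Fin m)) (j : Fin m)
    (hn : (Finset.univ : Finset α).Nonempty)
    (h : order.find? (fun x => S x = Finset.univ) = some j) :
    greedyList S order Finset.univ = [j] := by
  cases order with
  | nil => simp at h
  | cons b rest =>
      have hb := bestIdx_find S rest b j h
      have hj : S j = Finset.univ := by simpa using List.find?_some h
      rw [greedyList]
      simp only [hb, hj, Finset.inter_self, hn, dif_pos, Finset.sdiff_self,
        greedyList_empty_ucov]

lemma unionSet_eq_univ (S : Fin m → Finset α) (j : Fin m) (hj : S j = Finset.univ) :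
    unionSet S = Finset.univ := by
  apply Finset.eq_univ_of_forall
  intro x
  exact Finset.mem_biUnion.mpr ⟨j, Finset.mem_univ j, by simp [hj]⟩

lemma find?_exists (S : Fin m → Finset α) (π : Equiv.Perm (Fin m)) (j0 : Fin m)
    (hj0 : S j0 = Finset.univ) :
    ∃ j, ((List.finRange m).map π).find? (fun x => S x = Finset.univ) = some j := by
  rw [← Option.isSome_iff_exists, List.find?_isSome]
  exact ⟨j0, List.mem_map.mpr ⟨π⁻¹ j0, List.mem_finRange _, by simp⟩, by simpa using hj0⟩

lemma swap_find (S : Fin m → Finset α) (a b : Fin m)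
    (ha : S a = Finset.univ) (hb : S b = Finset.univ) (π : Equiv.Perm (Fin m)) :
    ((List.finRange m).map ⇑(Equiv.swap a b * π)).find? (fun x => S x = Finset.univ)
      = Option.map (Equiv.swap a b)
        (((List.finRange m).map ⇑π).find? (fun x => S x = Finset.univ)) := by
  have hcomp : (List.finRange m).map ⇑(Equiv.swap a b * π)
      = ((List.finRange m).map ⇑π).map ⇑(Equiv.swap a b) := by
    rw [List.map_map]; rfl
  rw [hcomp, List.find?_map]
  have hp : ((fun x => decide (S x = Finset.univ)) ∘ ⇑(Equiv.swap a b))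
      = (fun x => decide (S x = Finset.univ)) := by
    funext x
    simp only [Function.comp_apply]
    congr 1
    by_cases hxa : x = a
    · subst hxa; rw [Equiv.swap_apply_left, hb, ha]
    by_cases hxb : x = b
    · subst hxb; rw [Equiv.swap_apply_right, ha, hb]
    · rw [Equiv.swap_apply_of_ne_of_ne hxa hxb]
  rw [hp]

lemma probSel_eq (S : Fin m → Finset α) (hn : (Finset.univ : Finset α).Nonempty)
    (F : Finset (Fin m)) (hF : ∀ x, x ∈ F ↔ S x = Finset.univ) (hFne : F.Nonempty)
    (i : Fin m) :
    probSel S i = if S i = Finset.univ then (F.card : ℝ)⁻¹ else 0 := by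
  classical
  obtain ⟨j0, hj0⟩ := hFne
  have hj0' : S j0 = Finset.univ := (hF j0).mp hj0
  have hU : unionSet S = Finset.univ := unionSet_eq_univ S j0 hj0'
  have hmem : ∀ (π : Equiv.Perm (Fin m)) (k : Fin m),
      (k ∈ greedyList S ((List.finRange m).map π) (unionSet S)) ↔
      ((List.finRange m).map ⇑π).find? (fun x => S x = Finset.univ) = some k := by
    intro π k
    obtain ⟨j, hj⟩ := find?_exists S π j0 hj0'
    rw [hU, greedyList_eq_single S _ j hn hj, hj]
    simp [eq_comm]
  have hfilt : ∀ k : Fin m,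
      (Finset.univ.filter (fun π : Equiv.Perm (Fin m) =>
        k ∈ greedyList S ((List.finRange m).map π) (unionSet S)))
      = Finset.univ.filter (fun π : Equiv.Perm (Fin m) =>
          ((List.finRange m).map ⇑π).find? (fun x => S x = Finset.univ) = some k) := by
    intro k
    apply Finset.filter_congr
    intro π _
    simp [hmem π k]
  by_cases hi : S i = Finset.univ
  · rw [if_pos hi]
    have hiF : i ∈ F := (hF i).mpr hi
    -- all counts equal
    have hceq : ∀ k ∈ F,
        (Finset.univ.filter (fun π : Equiv.Perm (Fin m) =>
          ((List.finRange m).map ⇑π).find? (fun x => S x = Finset.univ) = some k)).card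
        = (Finset.univ.filter (fun π : Equiv.Perm (Fin m) =>
          ((List.finRange m).map ⇑π).find? (fun x => S x = Finset.univ) = some i)).card := by
      intro k hk
      have hkU : S k = Finset.univ := (hF k).mp hk
      apply Finset.card_bij' (fun π _ => Equiv.swap i k * π) (fun π _ => Equiv.swap i k * π)
      · intro π hπ
        simp only [Finset.mem_filter, Finset.mem_univ, true_and] at hπ ⊢
        rw [swap_find S i k hi hkU, hπ]
        simp [Equiv.swap_apply_right]
      · intro π hπ
        simp only [Finset.mem_filter, Finset.mem_univ, true_and] at hπ ⊢
        rw [swap_find S i k hi hkU, hπ]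
        simp [Equiv.swap_apply_left]
      · intro π _
        rw [← mul_assoc, Equiv.swap_mul_self, one_mul]
      · intro π _
        rw [← mul_assoc, Equiv.swap_mul_self, one_mul]
    -- partition
    have hpart : (Finset.univ : Finset (Equiv.Perm (Fin m)))
        = F.biUnion (fun k => Finset.univ.filter (fun π : Equiv.Perm (Fin m) =>
            ((List.finRange m).map ⇑π).find? (fun x => S x = Finset.univ) = some k)) := by
      ext π
      simp only [Finset.mem_univ, Finset.mem_biUnion, Finset.mem_filter, true_and, true_iff]
      obtain ⟨j, hj⟩ := find?_exists S π j0 hj0'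
      have : S j = Finset.univ := by simpa using List.find?_some hj
      exact ⟨j, (hF j).mpr this, hj⟩
    have hdisj : ∀ x ∈ F, ∀ y ∈ F, x ≠ y →
        Disjoint (Finset.univ.filter (fun π : Equiv.Perm (Fin m) =>
            ((List.finRange m).map ⇑π).find? (fun x => S x = Finset.univ) = some x))
          (Finset.univ.filter (fun π : Equiv.Perm (Fin m) =>
            ((List.finRange m).map ⇑π).find? (fun x => S x = Finset.univ) = some y)) := by
      intro x _ y _ hxy
      rw [Finset.disjoint_left]
      intro π h1 h2
      simp only [Finset.mem_filter, Finset.mem_univ, true_and] at h1 h2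
      rw [h1] at h2
      exact hxy (by simpa using h2)
    have hcard : (Finset.univ : Finset (Equiv.Perm (Fin m))).card = m.factorial := by
      rw [← Fintype.card, Fintype.card_perm, Fintype.card_fin]
    have hsum : F.card *
        (Finset.univ.filter (fun π : Equiv.Perm (Fin m) =>
          ((List.finRange m).map ⇑π).find? (fun x => S x = Finset.univ) = some i)).card
        = m.factorial := by
      rw [← hcard]
      conv_rhs => rw [hpart]
      rw [Finset.card_biUnion hdisj]
      rw [Finset.sum_congr rfl hceq, Finset.sum_const, smul_eq_mul]
    have hF0 : (F.card : ℝ) ≠ 0 := by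
      have : i ∈ F := hiF
      have : 0 < F.card := Finset.card_pos.mpr ⟨i, hiF⟩
      exact Nat.cast_ne_zero.mpr this.ne'
    have hm0 : (m.factorial : ℝ) ≠ 0 := by positivity
    rw [probSel, hfilt i]
    have hsumR : (F.card : ℝ) *
        ((Finset.univ.filter (fun π : Equiv.Perm (Fin m) =>
          ((List.finRange m).map ⇑π).find? (fun x => S x = Finset.univ) = some i)).card : ℝ)
        = (m.factorial : ℝ) := by exact_mod_cast hsum
    rw [div_eq_iff hm0, inv_mul_eq_div, eq_div_iff hF0]
    linarith [hsumR]
  · rw [if_neg hi, probSel, hfilt i]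
    have : (Finset.univ.filter (fun π : Equiv.Perm (Fin m) =>
          ((List.finRange m).map ⇑π).find? (fun x => S x = Finset.univ) = some i)) = ∅ := by
      apply Finset.filter_false_of_mem
      intro π _ hc
      exact hi (by simpa using List.find?_some hc)
    rw [this]
    simp

end Aux

/-- With the non-deterministic greedy algorithm, for an integer
ρ ≥ 2 with m > ρn and β/((1+ρ)n) < α ≤ β/(ρn), the joint strategy in which
exactly ρ agents choose all of U and the rest choose ∅ is a pure Nash
equilibrium. -/
theorem scigN_rho_full_nash {α : Type*} [Fintype α] [DecidableEq α] {m : ℕ}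
    (beta alpha : ℝ) (hbeta : 0 < beta) (halpha : 0 < alpha)
    (hn : 1 ≤ Fintype.card α)
    (rho : ℕ) (hrho : 2 ≤ rho) (hm : rho * Fintype.card α < m)
    (hlo : beta / (((1 : ℝ) + rho) * (Fintype.card α : ℝ)) < alpha)
    (hhi : alpha ≤ beta / ((rho : ℝ) * (Fintype.card α : ℝ)))
    (S : Fin m → Finset α) (I : Finset (Fin m)) (hI : I.card = rho)
    (hfull : ∀ i ∈ I, S i = Finset.univ)
    (hemp : ∀ i ∉ I, S i = ∅) :
    IsNashN beta alpha S := by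
  classical
  intro i T
  have hNα : Nonempty α := Fintype.card_pos_iff.mp (by omega)
  have hunivne : (Finset.univ : Finset α).Nonempty := Finset.univ_nonempty
  have hne : (∅ : Finset α) ≠ Finset.univ := Ne.symm hunivne.ne_empty
  have hFS : ∀ x, x ∈ I ↔ S x = Finset.univ := by
    intro x
    constructor
    · exact hfull x
    · intro h
      by_contra hx
      rw [hemp x hx] at h
      exact hne h
  have hIne : I.Nonempty := Finset.card_pos.mp (by omega)
  have hρpos : (0:ℝ) < (rho : ℝ) := by
    have : (2:ℝ) ≤ (rho:ℝ) := by exact_mod_cast hrho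
    linarith
  have hnR : (1:ℝ) ≤ (Fintype.card α : ℝ) := by exact_mod_cast hn
  have hcardT : (T.card : ℝ) ≤ (Fintype.card α : ℝ) := by
    exact_mod_cast (Finset.card_le_univ T).trans_eq (Finset.card_univ)
  have hTpos : (0:ℝ) ≤ alpha * (T.card : ℝ) := by positivity
  set n : ℝ := (Fintype.card α : ℝ) with hnn
  -- h1 : alpha * n * rho ≤ beta  (from hhi)
  have h1 : alpha * n * (rho:ℝ) ≤ beta := by
    rw [le_div_iff₀ (by positivity)] at hhi
    nlinarith [hhi]
  -- h2 : beta < alpha * (1 + rho) * n  (from hlo)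
  have h2 : beta < alpha * ((1:ℝ) + (rho:ℝ)) * n := by
    rw [div_lt_iff₀ (by positivity)] at hlo
    nlinarith [hlo]
  by_cases hiI : i ∈ I
  · -- original utility: beta / rho - alpha * n
    have hSi : S i = Finset.univ := hfull i hiI
    have horig : utilN beta alpha S i = beta * ((rho:ℝ))⁻¹ - alpha * n := by
      rw [utilN, probSel_eq S hunivne I hFS hIne i, if_pos hSi, hSi, hI,
        Finset.card_univ]
    rw [horig]
    by_cases hT : T = Finset.univ
    · have : Function.update S i T = S := by
        rw [hT, ← hSi]; exact Function.update_eq_self i S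
      rw [this, horig]
    · -- deviator drops out; new full set is I.erase i
      have hFS' : ∀ x, x ∈ I.erase i ↔ Function.update S i T x = Finset.univ := by
        intro x
        by_cases hx : x = i
        · subst hx
          simp only [Function.update_self, Finset.mem_erase, ne_eq,
            not_true_eq_false, false_and, false_iff]
          exact hT
        · rw [Function.update_of_ne hx, Finset.mem_erase]
          exact ⟨fun h => (hFS x).mp h.2, fun h => ⟨hx, (hFS x).mpr h⟩⟩
      have hFne' : (I.erase i).Nonempty := by
        apply Finset.card_pos.mp
        rw [Finset.card_erase_of_mem hiI, hI]
        omega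
      have hdev : utilN beta alpha (Function.update S i T) i
          = - (alpha * (T.card : ℝ)) := by
        rw [utilN, probSel_eq _ hunivne (I.erase i) hFS' hFne' i,
          if_neg (by rw [Function.update_self]; exact hT), Function.update_self]
        ring
      rw [hdev]
      have h3 : alpha * n ≤ beta * ((rho:ℝ))⁻¹ := by
        rw [← div_eq_mul_inv, le_div_iff₀ hρpos]
        exact h1
      linarith
  · -- original utility: 0
    have hSi : S i = ∅ := hemp i hiI
    have horig : utilN beta alpha S i = 0 := by
      rw [utilN, probSel_eq S hunivne I hFS hIne i,
        if_neg (by rw [hSi]; exact hne), hSi]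
      simp
    rw [horig]
    by_cases hT : T = Finset.univ
    · -- joins the full group: new full set is insert i I
      have hFS' : ∀ x, x ∈ insert i I ↔ Function.update S i T x = Finset.univ := by
        intro x
        by_cases hx : x = i
        · subst hx
          simp only [Function.update_self, Finset.mem_insert, true_or, true_iff]
          · exact hT
        · rw [Function.update_of_ne hx, Finset.mem_insert]
          constructor
          · rintro (h | h)
            · exact absurd h hx
            · exact (hFS x).mp h
          · intro h; exact Or.inr ((hFS x).mpr h)
      have hcard' : ((insert i I).card : ℝ) = (rho : ℝ) + 1 := by
        rw [Finset.card_insert_of_notMem hiI, hI]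
        push_cast; ring
      have hdev : utilN beta alpha (Function.update S i T) i
          = beta * ((rho:ℝ) + 1)⁻¹ - alpha * n := by
        rw [utilN, probSel_eq _ hunivne (insert i I) hFS'
            ⟨i, Finset.mem_insert_self i I⟩ i,
          if_pos (by rw [Function.update_self]; exact hT), Function.update_self,
          hcard', hT, Finset.card_univ]
      rw [hdev]
      have hρ1 : (0:ℝ) < (rho:ℝ) + 1 := by linarith
      have : beta * ((rho:ℝ) + 1)⁻¹ < alpha * n := by
        rw [← div_eq_mul_inv, div_lt_iff₀ hρ1]
        nlinarith [h2]
      linarith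
    · -- still not selected
      have hFS' : ∀ x, x ∈ I ↔ Function.update S i T x = Finset.univ := by
        intro x
        by_cases hx : x = i
        · subst hx
          simp only [Function.update_self]
          exact ⟨fun h => absurd h hiI, fun h => absurd h hT⟩
        · rw [Function.update_of_ne hx]
          exact hFS x
      have hdev : utilN beta alpha (Function.update S i T) i
          = - (alpha * (T.card : ℝ)) := by
        rw [utilN, probSel_eq _ hunivne I hFS' hIne i,
          if_neg (by rw [Function.update_self]; exact hT), Function.update_self]
        ring
      rw [hdev]
      linarith
end

section
/- In the set-cover instance game with the non-deterministic greedy algorithm and α < β/2, a joint strategy in which exactly one agent chooses S_i = U and all other agents choose the empty set is not a pure Nash equilibrium (the agent with S_i = U can strictly improve by deviating to a single-element strategy), provided n = |U| ≥ 2. -/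
open Finset

section SCIGAux

variable {α : Type*} [DecidableEq α] {m : ℕ}

lemma bestIdx_eq_of (S : Fin m → Finset α) (U : Finset α) (i : Fin m)
    (hpos : 0 < (S i ∩ U).card) (hzero : ∀ j, j ≠ i → (S j ∩ U).card = 0) :
    ∀ (l : List (Fin m)) (b : Fin m), (b = i ∨ i ∈ l) → bestIdx S U l b = i := by
  intro l
  induction l with
  | nil =>
    intro b hb
    rcases hb with h | h
    · simp [bestIdx, h]
    · simp at h
  | cons j rest ih =>
    intro b hb
    rw [bestIdx]
    rcases hb with rfl | hmem
    · have hno : ¬ (S b ∩ U).card < (S j ∩ U).card := by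
        by_cases hj : j = b
        · simp [hj]
        · rw [hzero j hj]; omega
      rw [if_neg hno]; exact ih b (Or.inl rfl)
    · rcases List.mem_cons.mp hmem with rfl | hr
      · by_cases hc : (S b ∩ U).card < (S i ∩ U).card
        · rw [if_pos hc]; exact ih i (Or.inl rfl)
        · rw [if_neg hc]
          by_cases hbi : b = i
          · exact ih b (Or.inl hbi)
          · exfalso; have := hzero b hbi; omega
      · by_cases hc : (S b ∩ U).card < (S j ∩ U).card
        · rw [if_pos hc]; exact ih j (Or.inr hr)
        · rw [if_neg hc]; exact ih b (Or.inr hr)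

lemma unionSet_eq (S : Fin m → Finset α) (i : Fin m)
    (hzero : ∀ j, j ≠ i → S j = ∅) : unionSet S = S i := by
  ext x
  simp only [unionSet, mem_biUnion, mem_univ, true_and]
  constructor
  · rintro ⟨j, hj⟩
    by_cases h : j = i
    · subst h; exact hj
    · simp [hzero j h] at hj
  · intro hx; exact ⟨i, hx⟩

lemma mem_greedy (S : Fin m → Finset α) (i : Fin m)
    (hpos : (S i).Nonempty) (hzero : ∀ j, j ≠ i → S j = ∅)
    (l : List (Fin m)) (hl : i ∈ l) :
    i ∈ greedyList S l (unionSet S) := by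
  have hU : unionSet S = S i := unionSet_eq S i hzero
  cases l with
  | nil => simp at hl
  | cons b rest =>
    rw [greedyList]
    have hb : bestIdx S (unionSet S) rest b = i := by
      apply bestIdx_eq_of
      · rw [hU, inter_self]; exact card_pos.mpr hpos
      · intro j hj; simp [hzero j hj]
      · rcases List.mem_cons.mp hl with h | h
        · exact Or.inl h.symm
        · exact Or.inr h
    simp only [hb]
    rw [dif_pos]
    · exact List.mem_cons_self
    · rw [hU, inter_self]; exact hpos

lemma probSel_eq_one (S : Fin m → Finset α) (i : Fin m)
    (hpos : (S i).Nonempty) (hzero : ∀ j, j ≠ i → S j = ∅) :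
    probSel S i = 1 := by
  have hfilter : (Finset.univ.filter (fun π : Equiv.Perm (Fin m) =>
      i ∈ greedyList S ((List.finRange m).map π) (unionSet S))) = Finset.univ := by
    apply Finset.filter_true_of_mem
    intro π _
    apply mem_greedy S i hpos hzero
    simp only [List.mem_map]
    exact ⟨π.symm i, List.mem_finRange _, π.apply_symm_apply i⟩
  rw [probSel, hfilter]
  rw [Finset.card_univ, Fintype.card_perm, Fintype.card_fin]
  rw [div_self]
  exact_mod_cast (Nat.factorial_pos m).ne'

end SCIGAux

/-- With the non-deterministic greedy algorithm and α < β/2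
(and n ≥ 2), a joint strategy with exactly one agent choosing all of U and all
others choosing ∅ is not a pure Nash equilibrium. -/
theorem scigN_single_full_not_nash {α : Type*} [Fintype α] [DecidableEq α] {m : ℕ}
    (beta alpha : ℝ) (hbeta : 0 < beta) (halpha : 0 < alpha)
    (hab : alpha < beta / 2) (hn : 2 ≤ Fintype.card α)
    (S : Fin m → Finset α) (i : Fin m) (hi : S i = Finset.univ)
    (hothers : ∀ j : Fin m, j ≠ i → S j = ∅) :
    ¬ IsNashN beta alpha S := by
  intro hnash
  obtain ⟨x, hx⟩ : (Finset.univ : Finset α).Nonempty := by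
    rw [← Finset.card_pos, Finset.card_univ]; omega
  have h1 := hnash i {x}
  set S' := Function.update S i {x} with hS'
  have hS'i : S' i = {x} := Function.update_self i {x} S
  have hS'others : ∀ j, j ≠ i → S' j = ∅ := fun j hj => by
    rw [hS', Function.update_of_ne hj]; exact hothers j hj
  have hp1 : probSel S i = 1 := probSel_eq_one S i (by rw [hi]; exact ⟨x, hx⟩) hothers
  have hp2 : probSel S' i = 1 :=
    probSel_eq_one S' i (by rw [hS'i]; exact ⟨x, Finset.mem_singleton_self x⟩) hS'others
  rw [utilN, utilN, hp1, hp2, hS'i, hi, Finset.card_univ, Finset.card_singleton] at h1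
  have h2 : (2:ℝ) ≤ (Fintype.card α : ℝ) := by exact_mod_cast hn
  push_cast at h1
  nlinarith
end

section
/- In the set-cover instance game with the deterministic greedy algorithm, in any pure Nash equilibrium every agent receives nonnegative utility, and when α = β every agent receives exactly zero utility. -/
open Finset

/-- With the deterministic greedy algorithm, in any pure Nash
equilibrium every agent receives nonnegative utility; when α = β every agent
receives exactly zero utility. -/
theorem scigD_nash_utilities {α : Type*} [DecidableEq α] {m : ℕ}
    (beta alpha : ℝ) (hbeta : 0 < beta) (halpha : 0 < alpha)
    (S : Fin m → Finset α) (hN : IsNashD beta alpha S) :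
    (∀ i : Fin m, 0 ≤ utilD beta alpha S i) ∧
      (alpha = beta → ∀ i : Fin m, utilD beta alpha S i = 0) := by
  have hmem : ∀ (U : Finset α) (order : List (Fin m)) (j : Fin m),
      j ∈ greedyList S order U → (S j).Nonempty := by
    intro U
    induction U using Finset.strongInductionOn with
    | _ U ih =>
      intro order j hj
      match order with
      | [] => simp [greedyList] at hj
      | b :: rest =>
        rw [greedyList] at hj
        set best := bestIdx S U rest b with hbest
        by_cases h : (S best ∩ U).Nonempty
        · rw [dif_pos h] at hj
          rcases List.mem_cons.mp hj with rfl | hj'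
          · exact h.mono (Finset.inter_subset_left)
          · refine ih (U \ S best) ?_ _ _ hj'
            refine ⟨Finset.sdiff_subset, fun hsub => ?_⟩
            obtain ⟨x, hx⟩ := h
            have hx1 := (Finset.mem_inter.mp hx).1
            have hx2 := (Finset.mem_inter.mp hx).2
            have := hsub hx2
            simp [Finset.mem_sdiff, hx1] at this
        · rw [dif_neg h] at hj; simp at hj
  have hnn : ∀ i : Fin m, 0 ≤ utilD beta alpha S i := by
    intro i
    have h0 : (0:ℝ) ≤ utilD beta alpha (Function.update S i ∅) i := by
      unfold utilD
      simp only [Function.update_self, Finset.card_empty, Nat.cast_zero, mul_zero, sub_zero]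
      positivity
    exact h0.trans (hN i ∅)
  refine ⟨hnn, fun hab i => ?_⟩
  subst hab
  have h := hnn i
  unfold utilD at h ⊢
  by_cases hc : i ∈ coverD S
  · rw [if_pos hc] at h ⊢
    have hSne : (S i).Nonempty := hmem _ _ _ (List.mem_toFinset.mp hc)
    have hcard : 1 ≤ (S i).card := Finset.card_pos.mpr hSne
    have hle : (S i).card ≤ 1 := by
      by_contra hgt
      push_neg at hgt
      have : (2:ℝ) ≤ ((S i).card : ℝ) := by exact_mod_cast hgt
      nlinarith
    have : (S i).card = 1 := le_antisymm hle hcard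
    rw [this]; ring
  · rw [if_neg hc] at h ⊢
    have : (0:ℝ) ≤ ((S i).card : ℝ) := by positivity
    nlinarith
end

section
/- In the set-cover instance game with the non-deterministic greedy algorithm, with m > n and α < β/2, no pure Nash equilibrium exists in which every agent's strategy has cardinality at most 1 and some element of U is chosen by at most one agent while some agent has an empty strategy. -/
open Finset

section SCIG

variable {α : Type*} [DecidableEq α] {m : ℕ}

lemma sdiff_card_lt (U T : Finset α) (h : (T ∩ U).Nonempty) : (U \ T).card < U.card := by
  apply Finset.card_lt_card
  obtain ⟨x, hx⟩ := h
  rw [Finset.mem_inter] at hx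
  refine ⟨Finset.sdiff_subset, fun hsub => ?_⟩
  have := hsub hx.2
  simp [Finset.mem_sdiff, hx.1] at this

lemma bestIdx_card_le (S : Fin m → Finset α) (U : Finset α) :
    ∀ (l : List (Fin m)) (b : Fin m),
      (S b ∩ U).card ≤ (S (bestIdx S U l b) ∩ U).card
  | [], _ => le_refl _
  | i :: rest, b => by
      simp only [bestIdx]
      split_ifs with h
      · exact le_trans h.le (bestIdx_card_le S U rest i)
      · exact bestIdx_card_le S U rest b

lemma bestIdx_mem_card (S : Fin m → Finset α) (U : Finset α) :
    ∀ (l : List (Fin m)) (b j : Fin m), j ∈ l →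
      (S j ∩ U).card ≤ (S (bestIdx S U l b) ∩ U).card
  | i :: rest, b, j, hj => by
      simp only [bestIdx]
      rcases List.mem_cons.mp hj with rfl | hj
      · split_ifs with h
        · exact bestIdx_card_le S U rest j
        · exact le_trans (not_lt.mp h) (bestIdx_card_le S U rest b)
      · split_ifs with h
        · exact bestIdx_mem_card S U rest i j hj
        · exact bestIdx_mem_card S U rest b j hj

lemma bestIdx_mem (S : Fin m → Finset α) (U : Finset α) :
    ∀ (l : List (Fin m)) (b : Fin m), bestIdx S U l b = b ∨ bestIdx S U l b ∈ l
  | [], b => Or.inl rfl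
  | i :: rest, b => by
      simp only [bestIdx]
      split_ifs with h
      · rcases bestIdx_mem S U rest i with h' | h'
        · exact Or.inr (by simp [h'])
        · exact Or.inr (by simp [h'])
      · rcases bestIdx_mem S U rest b with h' | h'
        · exact Or.inl h'
        · exact Or.inr (by simp [h'])

lemma bestIdx_ne (S : Fin m → Finset α) (U : Finset α) :
    ∀ (l : List (Fin m)) (b k : Fin m), k ≠ b →
      (S k ∩ U).card ≤ (S b ∩ U).card → bestIdx S U l b ≠ k
  | [], b, k, hk, _ => fun h => absurd h.symm hk
  | i :: rest, b, k, hk, hle => by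
      simp only [bestIdx]
      by_cases hik : i = k
      · subst hik
        rw [if_neg (not_lt.mpr hle)]
        exact bestIdx_ne S U rest b i hk hle
      · split_ifs with h
        · exact bestIdx_ne S U rest i k (Ne.symm hik) (le_trans hle h.le)
        · exact bestIdx_ne S U rest b k hk hle

lemma bestIdx_append (S : Fin m → Finset α) (U : Finset α) :
    ∀ (l1 l2 : List (Fin m)) (b : Fin m),
      bestIdx S U (l1 ++ l2) b = bestIdx S U l2 (bestIdx S U l1 b)
  | [], l2, b => rfl
  | i :: rest, l2, b => by
      simp only [bestIdx, List.cons_append]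
      exact bestIdx_append S U rest l2 _

lemma greedyList_cons (S : Fin m → Finset α) (U : Finset α) (b : Fin m) (rest : List (Fin m)) :
    greedyList S (b :: rest) U =
      if (S (bestIdx S U rest b) ∩ U).Nonempty then
        (bestIdx S U rest b) :: greedyList S (b :: rest) (U \ S (bestIdx S U rest b))
      else [] := by
  rw [greedyList]; rfl


variable {α : Type*} [DecidableEq α] {m : ℕ}

lemma mem_greedy_nonempty (S : Fin m → Finset α) (U : Finset α) (order : List (Fin m))
    (i : Fin m) (h : i ∈ greedyList S order U) : (S i).Nonempty := by
  match order with
  | [] => simp [greedyList] at h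
  | b :: rest =>
    rw [greedyList_cons] at h
    split_ifs at h with hne
    rcases List.mem_cons.mp h with rfl | h'
    · exact ⟨_, (Finset.mem_inter.mp hne.choose_spec).1⟩
    · exact mem_greedy_nonempty S (U \ S (bestIdx S U rest b)) (b :: rest) i h'
    · exact absurd h List.not_mem_nil
termination_by U.card
decreasing_by exact sdiff_card_lt _ _ hne

lemma greedy_key (S : Fin m → Finset α) (e : α) (i0 : Fin m) (hS : S i0 = {e})
    (U : Finset α) (pre post : List (Fin m))
    (heU : e ∈ U) (hmax : ∀ k, (S k ∩ U).card ≤ 1)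
    (hpre : ∀ k ∈ pre, e ∉ S k) :
    i0 ∈ greedyList S (pre ++ i0 :: post) U := by
  have hi0card : (S i0 ∩ U).card = 1 := by
    rw [hS, Finset.singleton_inter_of_mem heU, Finset.card_singleton]
  match pre with
  | [] =>
    have hbest : bestIdx S U post i0 = i0 := by
      by_contra hb
      exact bestIdx_ne S U post i0 _ hb (le_trans (hmax _) hi0card.ge) rfl
    rw [List.nil_append, greedyList_cons, hbest,
      if_pos (Finset.card_pos.mp (hi0card ▸ Nat.one_pos))]
    exact List.mem_cons_self
  | p :: pre' =>
    have hrest : pre' ++ i0 :: post = (pre' ++ [i0]) ++ post := by simp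
    set b2 := bestIdx S U (pre' ++ [i0]) p with hb2
    set best := bestIdx S U (pre' ++ i0 :: post) p with hbest
    have hbest2 : best = bestIdx S U post b2 := by
      rw [hbest, hrest, bestIdx_append]
    have h2 : 1 ≤ (S b2 ∩ U).card :=
      hi0card ▸ bestIdx_mem_card S U _ p i0 (by simp)
    have h1 : 1 ≤ (S best ∩ U).card := hbest2 ▸ le_trans h2 (bestIdx_card_le S U post b2)
    have hne : (S best ∩ U).Nonempty := Finset.card_pos.mp h1
    rw [List.cons_append, greedyList_cons, ← hbest, if_pos hne]
    by_cases hbi : best = i0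
    · rw [hbi]; exact List.mem_cons_self
    · have heb : e ∉ S best := by
        intro hmem
        have hb2mem : b2 = p ∨ b2 ∈ pre' ++ [i0] := bestIdx_mem S U _ p
        have hbb2 : best ≠ b2 := by
          intro heq
          rw [heq] at hmem hbi
          rcases hb2mem with heq2 | hmem2
          · exact hpre p (List.mem_cons_self) (heq2 ▸ hmem)
          · rcases List.mem_append.mp hmem2 with hmem2 | hmem2
            · exact hpre b2 (List.mem_cons_of_mem _ hmem2) hmem
            · exact hbi (List.mem_singleton.mp hmem2)
        exact bestIdx_ne S U post b2 best hbb2 (le_trans (hmax _) h2) hbest2.symm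
      have hrec : i0 ∈ greedyList S ((p :: pre') ++ i0 :: post) (U \ S best) := by
        refine greedy_key S e i0 hS (U \ S best) (p :: pre') post
          (Finset.mem_sdiff.mpr ⟨heU, heb⟩) (fun k => ?_) hpre
        exact le_trans (Finset.card_le_card (Finset.inter_subset_inter
          (Finset.Subset.refl _) Finset.sdiff_subset)) (hmax k)
      exact List.mem_cons_of_mem _ hrec
termination_by U.card
decreasing_by exact sdiff_card_lt _ _ hne




variable {m : ℕ}

lemma order_decomp (π : Equiv.Perm (Fin m)) (k : Fin m) :
    (List.finRange m).map π =
      (((List.finRange m).map π).take (π.symm k : ℕ)) ++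
        k :: (((List.finRange m).map π).drop ((π.symm k : ℕ) + 1)) := by
  have hlen : ((List.finRange m).map π).length = m := by simp
  have ha : (π.symm k : ℕ) < ((List.finRange m).map π).length := by
    rw [hlen]; exact (π.symm k).isLt
  have hget : ((List.finRange m).map π)[(π.symm k : ℕ)] = k := by
    rw [List.getElem_map, List.getElem_finRange]
    exact (congrArg (⇑π) (Fin.ext rfl)).trans (Equiv.apply_symm_apply π k)
  conv_lhs => rw [← List.take_append_drop (π.symm k : ℕ) ((List.finRange m).map π)]
  rw [← List.getElem_cons_drop ha, hget]

lemma mem_take_pos (π : Equiv.Perm (Fin m)) (x : Fin m) (n : ℕ)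
    (h : x ∈ ((List.finRange m).map π).take n) : (π.symm x : ℕ) < n := by
  rw [List.mem_take_iff_getElem] at h
  obtain ⟨t, ht, hx⟩ := h
  rw [List.getElem_map, List.getElem_finRange] at hx
  have h3 : (π.symm x : ℕ) = t := by
    rw [← hx, Equiv.symm_apply_apply]; rfl
  rw [h3]
  exact lt_of_lt_of_le ht (min_le_left _ _)

lemma count_half (i0 j : Fin m) (hij : i0 ≠ j) :
    Nat.factorial m = 2 * (Finset.univ.filter
      (fun π : Equiv.Perm (Fin m) => (π.symm i0 : ℕ) < (π.symm j : ℕ))).card := by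
  classical
  have hsymm1 : ∀ π : Equiv.Perm (Fin m),
      (π.trans (Equiv.swap i0 j)).symm i0 = π.symm j := by
    intro π; simp [Equiv.symm_trans_apply]
  have hsymm2 : ∀ π : Equiv.Perm (Fin m),
      (π.trans (Equiv.swap i0 j)).symm j = π.symm i0 := by
    intro π; simp [Equiv.symm_trans_apply]
  have hcardAB : (Finset.univ.filter
      (fun π : Equiv.Perm (Fin m) => (π.symm i0 : ℕ) < (π.symm j : ℕ))).card =
      (Finset.univ.filter
      (fun π : Equiv.Perm (Fin m) => ¬ ((π.symm i0 : ℕ) < (π.symm j : ℕ)))).card := by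
    refine Finset.card_bij' (fun π _ => π.trans (Equiv.swap i0 j))
      (fun π _ => π.trans (Equiv.swap i0 j)) ?_ ?_ ?_ ?_
    · intro π hπ
      simp only [Finset.mem_filter, Finset.mem_univ, true_and] at hπ ⊢
      rw [hsymm1, hsymm2, not_lt]
      exact hπ.le
    · intro π hπ
      simp only [Finset.mem_filter, Finset.mem_univ, true_and, not_lt] at hπ ⊢
      rw [hsymm1, hsymm2]
      rcases lt_or_eq_of_le hπ with h | h
      · exact h
      · exact absurd (π.symm.injective (Fin.ext h)) (fun hh => hij hh.symm)
    · intro π _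
      ext x
      simp [Equiv.swap_apply_self]
    · intro π _
      ext x
      simp [Equiv.swap_apply_self]
  have hsum := Finset.card_filter_add_card_filter_not
    (s := (Finset.univ : Finset (Equiv.Perm (Fin m))))
    (p := fun π : Equiv.Perm (Fin m) => (π.symm i0 : ℕ) < (π.symm j : ℕ))
  have huniv : (Finset.univ : Finset (Equiv.Perm (Fin m))).card = Nat.factorial m := by
    rw [← Fintype.card, Fintype.card_perm, Fintype.card_fin]
  omega



end SCIG


theorem scigN_no_sparse_nash {α : Type*} [Fintype α] [DecidableEq α] {m : ℕ}
    (beta alpha : ℝ) (hbeta : 0 < beta) (halpha : 0 < alpha)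
    (hmn : Fintype.card α < m) (hab : alpha < beta / 2)
    (S : Fin m → Finset α) :
    ¬ (IsNashN beta alpha S ∧ (∀ i : Fin m, (S i).card ≤ 1) ∧
        (∃ e : α, (Finset.univ.filter (fun i : Fin m => e ∈ S i)).card ≤ 1) ∧
        (∃ i : Fin m, S i = ∅)) := by
  rintro ⟨hN, hcard1, ⟨e, he⟩, ⟨i0, hi0⟩⟩
  classical
  set S' := Function.update S i0 {e} with hS'def
  have hS'i0 : S' i0 = {e} := Function.update_self _ _ _
  have hS'k : ∀ k, k ≠ i0 → S' k = S k := fun k hk => Function.update_of_ne hk _ _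
  have hmaxU : ∀ (U : Finset α) (k : Fin m), (S' k ∩ U).card ≤ 1 := by
    intro U k
    refine le_trans (Finset.card_le_card Finset.inter_subset_left) ?_
    by_cases hk : k = i0
    · subst hk; rw [hS'i0]; simp
    · rw [hS'k k hk]; exact hcard1 k
  have heUnion : e ∈ unionSet S' :=
    Finset.mem_biUnion.mpr ⟨i0, Finset.mem_univ _, by
      rw [hS'i0]; exact Finset.mem_singleton_self e⟩
  have hprob0 : probSel S i0 = 0 := by
    unfold probSel
    rw [Finset.filter_false_of_mem, Finset.card_empty]
    · norm_num
    · intro π _ hmem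
      obtain ⟨x, hx⟩ := mem_greedy_nonempty S _ _ _ hmem
      rw [hi0] at hx
      exact absurd hx (Finset.notMem_empty x)
  have hu0 : utilN beta alpha S i0 = 0 := by
    unfold utilN
    rw [hprob0, hi0]
    simp
  have hkey : Nat.factorial m ≤ 2 * (Finset.univ.filter (fun π : Equiv.Perm (Fin m) =>
      i0 ∈ greedyList S' ((List.finRange m).map π) (unionSet S'))).card := by
    by_cases hex : ∃ j, e ∈ S j
    · obtain ⟨j, hj⟩ := hex
      have hji0 : j ≠ i0 := by
        rintro rfl
        rw [hi0] at hj
        exact absurd hj (Finset.notMem_empty e)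
      have huniq : ∀ k, e ∈ S k → k = j := by
        intro k hk
        exact Finset.card_le_one.mp he k
          (Finset.mem_filter.mpr ⟨Finset.mem_univ _, hk⟩) j
          (Finset.mem_filter.mpr ⟨Finset.mem_univ _, hj⟩)
      rw [count_half i0 j (Ne.symm hji0)]
      refine Nat.mul_le_mul_left 2 (Finset.card_le_card ?_)
      intro π hπ
      simp only [Finset.mem_filter, Finset.mem_univ, true_and] at hπ ⊢
      rw [order_decomp π i0]
      refine greedy_key S' e i0 hS'i0 _ _ _ heUnion (hmaxU _) ?_
      intro k hk hke
      have hkpos := mem_take_pos π k _ hk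
      by_cases hki : k = i0
      · subst hki; exact absurd hkpos (lt_irrefl _)
      · rw [hS'k k hki] at hke
        have hkj := huniq k hke
        subst hkj
        omega
    · push_neg at hex
      have hall : Finset.univ.filter (fun π : Equiv.Perm (Fin m) =>
          i0 ∈ greedyList S' ((List.finRange m).map π) (unionSet S')) = Finset.univ := by
        rw [Finset.filter_true_of_mem]
        intro π _
        rw [order_decomp π i0]
        refine greedy_key S' e i0 hS'i0 _ _ _ heUnion (hmaxU _) ?_
        intro k hk hke
        have hkpos := mem_take_pos π k _ hk
        by_cases hki : k = i0
        · subst hki; exact absurd hkpos (lt_irrefl _)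
        · rw [hS'k k hki] at hke
          exact hex k hke
      rw [hall, ← Fintype.card, Fintype.card_perm, Fintype.card_fin]
      omega
  have hm0 : (0:ℝ) < (Nat.factorial m : ℝ) := by exact_mod_cast Nat.factorial_pos m
  have hps : (1:ℝ)/2 ≤ probSel S' i0 := by
    unfold probSel
    rw [le_div_iff₀ hm0]
    have : (Nat.factorial m : ℝ) ≤ 2 * ((Finset.univ.filter (fun π : Equiv.Perm (Fin m) =>
        i0 ∈ greedyList S' ((List.finRange m).map π) (unionSet S'))).card : ℝ) := by
      exact_mod_cast hkey
    linarith
  have hnash := hN i0 {e}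
  rw [hu0] at hnash
  rw [show Function.update S i0 {e} = S' from rfl] at hnash
  unfold utilN at hnash
  rw [hS'i0, Finset.card_singleton, Nat.cast_one, mul_one] at hnash
  have h1 : beta * (1/2) ≤ beta * probSel S' i0 :=
    mul_le_mul_of_nonneg_left hps hbeta.le
  linarith
end
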